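/- arXiv:1610.04829 — 10 statements merged into one kernel-verified Lean document; each statement's English description precedes it below -/
import Mathlib

section
/- Let K and L be compact Hausdorff spaces, both zero-dimensional. Then L is a Boolean image of K if and only if L is a continuous image of K (i.e., there exists a continuous surjection from K onto L). -/
open Set

/-- `φ` is an isomorphism of the family `𝒢` of subsets of `X` with a family of
pseudoclopens of the topological space `K`: `φ` is injective on `𝒢`, each `φ a`
is a pseudoclopen (a pair of a closed set contained in an open set), and for all
finite disjoint `F, H ⊆ 𝒢` (i.e. pairwise distinct `a₁,…,aₙ,b₁,…,bₘ ∈ 𝒢`) the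
two implications between vanishing of `⋂ F \ ⋃ H` and of the corresponding
combinations of the pseudoclopens hold. -/
def IsPseudoclopenIso {X K : Type*} [TopologicalSpace K]
    (𝒢 : Set (Set X)) (φ : Set X → Set K × Set K) : Prop :=
  Set.InjOn φ 𝒢 ∧
  (∀ a ∈ 𝒢, IsClosed (φ a).1 ∧ IsOpen (φ a).2 ∧ (φ a).1 ⊆ (φ a).2) ∧
  ∀ F H : Set (Set X), F.Finite → H.Finite → F ⊆ 𝒢 → H ⊆ 𝒢 → Disjoint F H →
    ((⋂₀ F \ ⋃₀ H = ∅ → (⋂ a ∈ F, (φ a).2) \ (⋃ a ∈ H, (φ a).1) = ∅) ∧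
     ((⋂ a ∈ F, (φ a).1) \ (⋃ a ∈ H, (φ a).2) = ∅ → ⋂₀ F \ ⋃₀ H = ∅))

/-- A family of subsets of `L` separates the points of `L`. -/
def SeparatesPoints' {L : Type*} (𝒢 : Set (Set L)) : Prop :=
  ∀ x y : L, x ≠ y → ∃ a ∈ 𝒢, (x ∈ a ∧ y ∉ a) ∨ (y ∈ a ∧ x ∉ a)

/-- `L` is a Boolean image of `K`: there is a point-separating family of clopen
subsets of `L` which is isomorphic to a family of pseudoclopens of `K`. -/
def IsBooleanImage (L K : Type*) [TopologicalSpace L] [TopologicalSpace K] : Prop :=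
  ∃ (𝒢 : Set (Set L)) (φ : Set L → Set K × Set K),
    (∀ a ∈ 𝒢, IsClopen a) ∧ SeparatesPoints' 𝒢 ∧ IsPseudoclopenIso 𝒢 φ

/-- In a compact Hausdorff totally disconnected space, any closed set contained in an
open set can be sandwiched by a clopen set. -/
lemma clopen_sandwich {K : Type*} [TopologicalSpace K] [CompactSpace K] [T2Space K]
    [TotallyDisconnectedSpace K] {C U : Set K} (hC : IsClosed C) (hU : IsOpen U)
    (hCU : C ⊆ U) : ∃ V : Set K, IsClopen V ∧ C ⊆ V ∧ V ⊆ U := by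
  choose V hV hxV hVU using fun x : C => compact_exists_isClopen_in_isOpen hU (hCU x.2)
  obtain ⟨t, ht⟩ := hC.isCompact.elim_finite_subcover V (fun x => (hV x).2)
    (fun x hx => mem_iUnion.2 ⟨⟨x, hx⟩, hxV _⟩)
  exact ⟨⋃ x ∈ t, V x, t.finite_toSet.isClopen_biUnion (fun x _ => hV x), ht,
    iUnion₂_subset fun x _ => hVU x⟩

/-- For compact Hausdorff zero-dimensional `K` and `L`, `L` is a
Boolean image of `K` iff `L` is a continuous image of `K`. -/
theorem boolean_image_iff_continuous_image (K L : Type*)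
    [TopologicalSpace K] [TopologicalSpace L]
    [CompactSpace K] [T2Space K] [TotallyDisconnectedSpace K]
    [CompactSpace L] [T2Space L] [TotallyDisconnectedSpace L] :
    IsBooleanImage L K ↔ ∃ f : K → L, Continuous f ∧ Function.Surjective f := by
  constructor
  · rintro ⟨𝒢, φ, hclop, hsep, hinj, hpc, hrel⟩
    classical
    -- Step 1: round each pseudoclopen to a clopen set `c a` with `(φ a).1 ⊆ c a ⊆ (φ a).2`.
    have hchoice : ∀ s : Set L, ∃ V : Set K,
        s ∈ 𝒢 → IsClopen V ∧ (φ s).1 ⊆ V ∧ V ⊆ (φ s).2 := by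
      intro s
      by_cases h : s ∈ 𝒢
      · obtain ⟨V, h1, h2, h3⟩ := clopen_sandwich (hpc s h).1 (hpc s h).2.1 (hpc s h).2.2
        exact ⟨V, fun _ => ⟨h1, h2, h3⟩⟩
      · exact ⟨∅, fun h' => absurd h' h⟩
    choose c hc using hchoice
    -- Step 2: `c` exactly preserves the emptiness relations.
    have hcrel : ∀ F H : Set (Set L), F.Finite → H.Finite → F ⊆ 𝒢 → H ⊆ 𝒢 → Disjoint F H →
        ((⋂₀ F \ ⋃₀ H).Nonempty ↔ ((⋂ a ∈ F, c a) \ (⋃ a ∈ H, c a)).Nonempty) := by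
      intro F H hF hH hF𝒢 hH𝒢 hdisj
      obtain ⟨h1, h2⟩ := hrel F H hF hH hF𝒢 hH𝒢 hdisj
      rw [nonempty_iff_ne_empty, nonempty_iff_ne_empty]
      constructor
      · intro hne hcE
        apply hne
        apply h2
        rw [← subset_empty_iff, ← hcE]
        exact diff_subset_diff (iInter₂_mono fun a ha => (hc a (hF𝒢 ha)).2.1)
          (iUnion₂_mono fun a ha => (hc a (hH𝒢 ha)).2.2)
      · intro hne hE
        apply hne
        rw [← subset_empty_iff, ← h1 hE]
        exact diff_subset_diff (iInter₂_mono fun a ha => (hc a (hF𝒢 ha)).2.2)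
          (iUnion₂_mono fun a ha => (hc a (hH𝒢 ha)).2.1)
    -- A splitting helper.
    have hsplit : ∀ (P : Set L → Prop) (u : Finset ↥𝒢),
        ∃ F H : Set (Set L), F.Finite ∧ H.Finite ∧ F ⊆ 𝒢 ∧ H ⊆ 𝒢 ∧ Disjoint F H ∧
          (∀ s ∈ F, P s) ∧ (∀ s ∈ H, ¬ P s) ∧
          (∀ a : ↥𝒢, a ∈ u → (P ↑a → ↑a ∈ F) ∧ (¬ P ↑a → ↑a ∈ H)) := by
      intro P u
      refine ⟨Subtype.val '' {a : ↥𝒢 | a ∈ u ∧ P ↑a},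
        Subtype.val '' {a : ↥𝒢 | a ∈ u ∧ ¬ P ↑a},
        (u.finite_toSet.subset fun a ha => ha.1).image _,
        (u.finite_toSet.subset fun a ha => ha.1).image _,
        ?_, ?_, ?_, ?_, ?_, ?_⟩
      · rintro s ⟨a, -, rfl⟩; exact a.2
      · rintro s ⟨a, -, rfl⟩; exact a.2
      · rw [Set.disjoint_left]
        rintro s ⟨a, ⟨-, hPa⟩, rfl⟩ ⟨b, ⟨-, hPb⟩, hba⟩
        exact hPb (hba ▸ hPa)
      · rintro s ⟨a, ⟨-, hPa⟩, rfl⟩; exact hPa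
      · rintro s ⟨a, ⟨-, hPa⟩, rfl⟩; exact hPa
      · exact fun a ha => ⟨fun h => ⟨a, ⟨ha, h⟩, rfl⟩, fun h => ⟨a, ⟨ha, h⟩, rfl⟩⟩

    -- Step 3: for every `x : K` the candidate fiber in `L` is nonempty.
    have hS : ∀ x : K,
        (⋂ a : 𝒢, (if x ∈ c ↑a then (↑a : Set L) else (↑a : Set L)ᶜ)).Nonempty := by
      intro x
      have key := isCompact_univ.inter_iInter_nonempty
          (fun a : 𝒢 => if x ∈ c ↑a then (↑a : Set L) else (↑a : Set L)ᶜ)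
          (fun a => by
            by_cases h : x ∈ c ↑a
            · simpa [h] using (hclop ↑a a.2).1
            · simpa [h] using (hclop ↑a a.2).compl.1)
          (fun u => ?_)
      · simpa using key
      · obtain ⟨F, H, hFfin, hHfin, hF𝒢, hH𝒢, hdis, hPF, hPH, hmem⟩ :=
          hsplit (fun s => x ∈ c s) u
        have hxK : x ∈ (⋂ a ∈ F, c a) \ (⋃ a ∈ H, c a) := by
          refine ⟨mem_iInter₂.2 fun s hs => hPF s hs, fun hx => ?_⟩
          obtain ⟨s, hs, hxs⟩ := mem_iUnion₂.1 hx
          exact hPH s hs hxs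
        obtain ⟨y, hy⟩ := (hcrel F H hFfin hHfin hF𝒢 hH𝒢 hdis).2 ⟨x, hxK⟩
        refine ⟨y, mem_univ y, mem_iInter₂.2 fun a ha => ?_⟩
        by_cases h : x ∈ c ↑a
        · simp only [if_pos h]
          exact hy.1 _ ((hmem a ha).1 h)
        · simp only [if_neg h]
          exact fun hya => hy.2 ⟨↑a, (hmem a ha).2 h, hya⟩
    -- Step 4: define `f` and its key property.
    choose f hfx using hS
    have hf : ∀ (x : K) (a : ↥𝒢), f x ∈ (↑a : Set L) ↔ x ∈ c ↑a := by
      intro x a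
      have := mem_iInter.1 (hfx x) a
      by_cases h : x ∈ c ↑a
      · simp only [if_pos h] at this
        exact ⟨fun _ => h, fun _ => this⟩
      · simp only [if_neg h] at this
        exact ⟨fun hm => absurd hm this, fun hm => absurd hm h⟩
    -- Step 5: continuity.
    have hcont : Continuous f := by
      rw [continuous_def]
      intro U hU
      rw [isOpen_iff_forall_mem_open]
      intro x hx
      have hC : IsCompact Uᶜ := hU.isClosed_compl.isCompact
      have hcover : ∀ z : ↥Uᶜ, ∃ b : Set L,
          z.1 ∈ b ∧ f x ∉ b ∧ IsOpen b ∧ IsClopen (f ⁻¹' b) := by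
        intro z
        obtain ⟨a, ha, hcase⟩ := hsep z.1 (f x) (fun h => z.2 (h ▸ hx))
        have hpa : f ⁻¹' a = c a := Set.ext fun w => hf w ⟨a, ha⟩
        rcases hcase with ⟨hz, hfxa⟩ | ⟨hfxa, hz⟩
        · exact ⟨a, hz, hfxa, (hclop a ha).2, hpa ▸ (hc a ha).1⟩
        · exact ⟨aᶜ, hz, fun h => h hfxa, (hclop a ha).compl.2,
            by rw [preimage_compl, hpa]; exact (hc a ha).1.compl⟩
      choose b hzb hfxb hob hclb using hcover
      obtain ⟨t, ht⟩ := hC.elim_finite_subcover b hob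
        (fun z hz => mem_iUnion.2 ⟨⟨z, hz⟩, hzb _⟩)
      refine ⟨⋂ z ∈ t, (f ⁻¹' (b z))ᶜ, ?_, ?_, ?_⟩
      · intro w hw
        by_contra hwU
        obtain ⟨z, hz, hwz⟩ := mem_iUnion₂.1 (ht hwU)
        exact (mem_iInter₂.1 hw z hz) hwz
      · exact isOpen_biInter_finset fun z _ => (hclb z).compl.2
      · exact mem_iInter₂.2 fun z _ => hfxb z
    -- Step 6: surjectivity.
    have hfsurj : Function.Surjective f := by
      intro y
      have key := isCompact_univ.inter_iInter_nonempty
          (fun a : 𝒢 => if y ∈ (↑a : Set L) then c ↑a else (c ↑a)ᶜ)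
          (fun a => by
            by_cases h : y ∈ (↑a : Set L)
            · simpa [h] using (hc ↑a a.2).1.1
            · simpa [h] using (hc ↑a a.2).1.compl.1)
          (fun u => ?_)
      · obtain ⟨x, -, hx⟩ := key
        refine ⟨x, ?_⟩
        by_contra hne
        obtain ⟨a, ha, hcase⟩ := hsep (f x) y hne
        have hx' := mem_iInter.1 hx ⟨a, ha⟩
        have hfa : f x ∈ a ↔ x ∈ c a := hf x ⟨a, ha⟩
        rcases hcase with ⟨h1, h2⟩ | ⟨h1, h2⟩
        · simp only [if_neg h2] at hx'
          exact hx' (hfa.1 h1)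
        · simp only [if_pos h1] at hx'
          exact h2 (hfa.2 hx')
      · obtain ⟨F, H, hFfin, hHfin, hF𝒢, hH𝒢, hdis, hPF, hPH, hmem⟩ :=
          hsplit (fun s => y ∈ s) u
        have hyL : y ∈ ⋂₀ F \ ⋃₀ H := by
          refine ⟨fun s hs => hPF s hs, fun h => ?_⟩
          obtain ⟨s, hs, hys⟩ := h
          exact hPH s hs hys
        obtain ⟨x, hx⟩ := (hcrel F H hFfin hHfin hF𝒢 hH𝒢 hdis).1 ⟨y, hyL⟩
        refine ⟨x, mem_univ x, mem_iInter₂.2 fun a ha => ?_⟩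
        by_cases h : y ∈ (↑a : Set L)
        · simp only [if_pos h]
          exact mem_iInter₂.1 hx.1 ↑a ((hmem a ha).1 h)
        · simp only [if_neg h]
          exact fun hxc => hx.2 (mem_iUnion₂.2 ⟨↑a, ⟨(hmem a ha).2 h, hxc⟩⟩)
    exact ⟨f, hcont, hfsurj⟩
  · rintro ⟨f, hfc, hfs⟩
    refine ⟨{a : Set L | IsClopen a}, fun a => (f ⁻¹' a, f ⁻¹' a),
      fun a ha => ha, ?_, ?_, ?_, ?_⟩
    · intro x y hxy
      obtain ⟨U, hU, hx, hy⟩ := exists_isClopen_of_totally_separated hxy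
      exact ⟨U, hU, Or.inl ⟨hx, hy⟩⟩
    · intro a _ b _ h
      exact hfs.preimage_injective (congrArg Prod.fst h)
    · intro a ha
      exact ⟨ha.1.preimage hfc, ha.2.preimage hfc, subset_rfl⟩
    · intro F H _ _ _ _ _
      have hkey : ∀ S T : Set (Set L),
          (⋂ a ∈ S, f ⁻¹' a) \ (⋃ a ∈ T, f ⁻¹' a) = f ⁻¹' (⋂₀ S \ ⋃₀ T) := by
        intro S T
        rw [preimage_diff, preimage_sInter, preimage_sUnion]
      constructor
      · intro h
        rw [hkey, h, preimage_empty]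
      · intro h
        rw [hkey] at h
        have := preimage_eq_empty_iff.1 h
        rwa [hfs.range_eq, disjoint_univ] at this
end

section
/- Let K be a separably connected compact Hausdorff space and let L be a compact zero-dimensional Hausdorff space which is a Boolean image of K. Then either L is Corson compact, or L maps continuously onto the Cantor cube 2^{ω₁} (the product of ω₁ copies of the two-point discrete space, where ω₁ is the first uncountable ordinal). -/
open Set

/-- Any two points lie in a connected separable subspace. -/
def SeparablyConnected (K : Type*) [TopologicalSpace K] : Prop :=
  ∀ x y : K, ∃ S : Set K, x ∈ S ∧ y ∈ S ∧ IsConnected S ∧ TopologicalSpace.IsSeparable S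

/-- `L` is Corson compact: homeomorphic to a compact subset of a Σ-product of real lines. -/
def IsCorsonCompact (L : Type u) [TopologicalSpace L] : Prop :=
  ∃ (Γ : Type u) (S : Set (Γ → ℝ)), IsCompact S ∧
    (∀ x ∈ S, {γ | x γ ≠ 0}.Countable) ∧ Nonempty (L ≃ₜ ↥S)

/-- Auxiliary: a function which is constant on a clopen set and on its complement
is continuous. -/
theorem aux_cont_if {X α : Type*} [TopologicalSpace X] [TopologicalSpace α]
    {p : X → Prop} [DecidablePred p] (hp : IsClopen {x | p x}) (a b : α) :
    Continuous fun x => if p x then a else b := by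
  refine Continuous.if ?_ continuous_const continuous_const
  intro x hx
  rw [hp.frontier_eq] at hx
  exact absurd hx (Set.notMem_empty x)

/-- Auxiliary: any map from an empty space is continuous. -/
theorem aux_cont_empty {X Y : Type*} [TopologicalSpace X] [TopologicalSpace Y]
    [IsEmpty X] (f : X → Y) : Continuous f := by
  refine continuous_def.mpr fun s _ => ?_
  rw [Set.eq_empty_of_isEmpty (f ⁻¹' s)]
  exact isOpen_empty

/-- If `K` is separably connected compact Hausdorff and `L` is a
compact zero-dimensional Hausdorff Boolean image of `K`, then `L` is Corson
compact or `L` maps continuously onto the Cantor cube `2^{ω₁}`. -/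
theorem corson_or_onto_cantor_cube (K L : Type*)
    [TopologicalSpace K] [CompactSpace K] [T2Space K]
    [TopologicalSpace L] [CompactSpace L] [T2Space L] [TotallyDisconnectedSpace L]
    (hK : SeparablyConnected K) (hL : IsBooleanImage L K) :
    IsCorsonCompact L ∨
      ∃ f : L → ((Cardinal.aleph 1).ord.ToType → Bool),
        Continuous f ∧ Function.Surjective f := by
  classical
  obtain ⟨𝒢, φ, hclopen, hsep, hinj, hpc, hmain⟩ := hL
  -- trivial case: L empty
  by_cases hLe : IsEmpty L
  · left
    refine ⟨L, ∅, isCompact_empty, by simp, ⟨?_⟩⟩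
    exact
      { toEquiv := Equiv.equivOfIsEmpty L ↥(∅ : Set (L → ℝ))
        continuous_toFun := aux_cont_empty _
        continuous_invFun := aux_cont_empty _ }
  rw [not_isEmpty_iff] at hLe
  obtain ⟨x₀⟩ := hLe
  -- the family of elements of 𝒢 straddled at a point d of K
  set Gd : K → Set (Set L) := fun d => {a | a ∈ 𝒢 ∧ d ∈ (φ a).2 ∧ d ∉ (φ a).1} with hGd
  by_cases hA : ∃ d : K, ¬ (Gd d).Countable
  · -- CASE A : an uncountable straddled family gives a map onto the Cantor cube
    obtain ⟨d, hd⟩ := hA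
    right
    have h1 : Cardinal.aleph 1 ≤ Cardinal.mk (Gd d) := by
      by_contra h
      exact hd ((Cardinal.countable_iff_lt_aleph_one _).mpr (lt_of_not_ge h))
    have hemb : Nonempty ((Cardinal.aleph 1).ord.ToType ↪ ↥(Gd d)) := by
      rw [← Cardinal.lift_mk_le', Cardinal.mk_toType, Cardinal.card_ord]
      calc Cardinal.lift (Cardinal.aleph 1) = Cardinal.aleph 1 := by
            rw [Cardinal.lift_aleph, Ordinal.lift_one]
        _ ≤ Cardinal.lift (Cardinal.mk (Gd d)) := by
            have h2 := Cardinal.lift_le.mpr h1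
            rwa [Cardinal.lift_aleph, Ordinal.lift_one] at h2
    obtain ⟨j⟩ := hemb
    set ι : (Cardinal.aleph 1).ord.ToType → Set L := fun γ => ((j γ : ↥(Gd d)) : Set L)
      with hι
    have hιinj : Function.Injective ι :=
      fun γ₁ γ₂ h => j.injective (Subtype.coe_injective h)
    have hιmem : ∀ γ, ι γ ∈ 𝒢 ∧ d ∈ (φ (ι γ)).2 ∧ d ∉ (φ (ι γ)).1 := fun γ => (j γ).2
    refine ⟨fun x γ => if x ∈ ι γ then true else false, ?_, ?_⟩
    · exact continuous_pi fun γ => aux_cont_if (p := fun x => x ∈ ι γ) (hclopen _ (hιmem γ).1) true false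
    · intro g
      set C : (Cardinal.aleph 1).ord.ToType → Set L :=
        fun γ => {x | (if x ∈ ι γ then true else false) = g γ} with hC
      have hCc : ∀ γ, IsClosed (C γ) := by
        intro γ
        have hCeq : C γ = if g γ = true then ι γ else (ι γ)ᶜ := by
          ext x
          by_cases hx : x ∈ ι γ <;> cases hgγ : g γ <;> simp [C, hx, hgγ]
        rw [hCeq]
        split
        · exact (hclopen _ (hιmem γ).1).isClosed
        · exact (hclopen _ (hιmem γ).1).compl.isClosed
      have hne : (⋂ γ, C γ).Nonempty := by
        by_contra h
        rw [Set.not_nonempty_iff_eq_empty] at h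
        obtain ⟨t, ht⟩ := IsCompact.elim_finite_subfamily_closed isCompact_univ C hCc
          (by rw [Set.univ_inter, h])
        rw [Set.univ_inter] at ht
        set F : Set (Set L) := ι '' {γ | γ ∈ t ∧ g γ = true} with hF
        set H : Set (Set L) := ι '' {γ | γ ∈ t ∧ g γ = false} with hH
        have hFfin : F.Finite := (t.finite_toSet.subset fun γ h => h.1).image ι
        have hHfin : H.Finite := (t.finite_toSet.subset fun γ h => h.1).image ι
        have hFG : F ⊆ 𝒢 := by rintro s ⟨γ, _, rfl⟩; exact (hιmem γ).1
        have hHG : H ⊆ 𝒢 := by rintro s ⟨γ, _, rfl⟩; exact (hιmem γ).1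
        have hdisj : Disjoint F H := by
          rw [Set.disjoint_left]
          rintro s ⟨γ₁, ⟨_, hg1⟩, rfl⟩ ⟨γ₂, ⟨_, hg2⟩, heq⟩
          obtain rfl := hιinj heq
          rw [hg1] at hg2
          exact absurd hg2 (by simp)
        have hFH : ⋂₀ F \ ⋃₀ H = ∅ := by
          rw [Set.eq_empty_iff_forall_notMem]
          rintro x ⟨hxF, hxH⟩
          have hx : x ∈ ⋂ γ ∈ t, C γ := by
            refine Set.mem_iInter₂.mpr fun γ hγ => ?_
            cases hgγ : g γ with
            | true =>
              have hxι : x ∈ ι γ := Set.mem_sInter.mp hxF _ ⟨γ, ⟨hγ, hgγ⟩, rfl⟩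
              simp [C, hxι, hgγ]
            | false =>
              have hxι : x ∉ ι γ := fun hx' => hxH ⟨ι γ, ⟨γ, ⟨hγ, hgγ⟩, rfl⟩, hx'⟩
              simp [C, hxι, hgγ]
          rw [ht] at hx
          exact hx
        have h2 := (hmain F H hFfin hHfin hFG hHG hdisj).1 hFH
        have hd2 : d ∈ (⋂ a ∈ F, (φ a).2) \ (⋃ a ∈ H, (φ a).1) := by
          constructor
          · refine Set.mem_iInter₂.mpr ?_
            rintro a ⟨γ, _, rfl⟩
            exact (hιmem γ).2.1
          · intro hmem
            obtain ⟨a, haH, hda⟩ := Set.mem_iUnion₂.mp hmem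
            obtain ⟨γ, _, rfl⟩ := haH
            exact (hιmem γ).2.2 hda
        rw [h2] at hd2
        exact hd2
      obtain ⟨x, hx⟩ := hne
      exact ⟨x, funext fun γ => Set.mem_iInter.mp hx γ⟩
  · -- CASE B : every straddled family is countable; L is Corson compact
    push_neg at hA
    left
    -- for each x in L choose a point c x of K coding the trace of x on 𝒢
    have hc : ∀ x : L, ∃ c : K, ∀ a ∈ 𝒢, (x ∈ a → c ∈ (φ a).1) ∧ (x ∉ a → c ∉ (φ a).2) := by
      intro x
      set Z : ↥𝒢 → Set K := fun a => if x ∈ (a : Set L) then (φ (a : Set L)).1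
        else ((φ (a : Set L)).2)ᶜ with hZ
      have hZc : ∀ a, IsClosed (Z a) := by
        intro a
        by_cases hx : x ∈ (a : Set L)
        · simpa [Z, hx] using (hpc a a.2).1
        · simpa [Z, hx] using (hpc a a.2).2.1.isClosed_compl
      have hne : (⋂ a, Z a).Nonempty := by
        by_contra h
        rw [Set.not_nonempty_iff_eq_empty] at h
        obtain ⟨t, ht⟩ := IsCompact.elim_finite_subfamily_closed isCompact_univ Z hZc
          (by rw [Set.univ_inter, h])
        rw [Set.univ_inter] at ht
        set F : Set (Set L) := Subtype.val '' {a : ↥𝒢 | a ∈ t ∧ x ∈ (a : Set L)}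
          with hF
        set H : Set (Set L) := Subtype.val '' {a : ↥𝒢 | a ∈ t ∧ x ∉ (a : Set L)}
          with hH
        have hFfin : F.Finite := (t.finite_toSet.subset fun a h => h.1).image _
        have hHfin : H.Finite := (t.finite_toSet.subset fun a h => h.1).image _
        have hFG : F ⊆ 𝒢 := by rintro s ⟨a, _, rfl⟩; exact a.2
        have hHG : H ⊆ 𝒢 := by rintro s ⟨a, _, rfl⟩; exact a.2
        have hdisj : Disjoint F H := by
          rw [Set.disjoint_left]
          rintro s ⟨a, ⟨_, hxa⟩, rfl⟩ ⟨b, ⟨_, hxb⟩, heq⟩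
          exact hxb (heq ▸ hxa)
        have hsub : (⋂ s ∈ F, (φ s).1) \ (⋃ s ∈ H, (φ s).2) ⊆ ⋂ a ∈ t, Z a := by
          intro k hk
          refine Set.mem_iInter₂.mpr fun a ha => ?_
          by_cases hxa : x ∈ (a : Set L)
          · have hmem : k ∈ (φ (a : Set L)).1 :=
              Set.mem_iInter₂.mp hk.1 (a : Set L) ⟨a, ⟨ha, hxa⟩, rfl⟩
            simpa [Z, hxa] using hmem
          · have hmem : k ∉ (φ (a : Set L)).2 := fun hk2 =>
              hk.2 (Set.mem_iUnion₂.mpr ⟨(a : Set L), ⟨a, ⟨ha, hxa⟩, rfl⟩, hk2⟩)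
            simpa [Z, hxa] using hmem
        have hempty : (⋂ s ∈ F, (φ s).1) \ (⋃ s ∈ H, (φ s).2) = ∅ :=
          Set.subset_empty_iff.mp (ht ▸ hsub)
        have h2 := (hmain F H hFfin hHfin hFG hHG hdisj).2 hempty
        have hx : x ∈ ⋂₀ F \ ⋃₀ H := by
          constructor
          · refine Set.mem_sInter.mpr ?_
            rintro s ⟨a, ⟨_, hxa⟩, rfl⟩
            exact hxa
          · rintro ⟨s, ⟨a, ⟨_, hxa⟩, rfl⟩, hxs⟩
            exact hxa hxs
        rw [h2] at hx
        exact hx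
      obtain ⟨c, hcmem⟩ := hne
      refine ⟨c, fun a ha => ⟨fun hxa => ?_, fun hxa => ?_⟩⟩
      · have h3 := Set.mem_iInter.mp hcmem ⟨a, ha⟩
        simpa [Z, hxa] using h3
      · have h3 := Set.mem_iInter.mp hcmem ⟨a, ha⟩
        simpa [Z, hxa] using h3
    choose c hcprop using hc
    -- the set of elements of 𝒢 separating x from x₀ is countable
    have hcount : ∀ x : L, {a | a ∈ 𝒢 ∧ ¬(x ∈ a ↔ x₀ ∈ a)}.Countable := by
      intro x
      obtain ⟨S, hcxS, hcx0S, hSconn, hSsep⟩ := hK (c x) (c x₀)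
      obtain ⟨D, hDc, hSD⟩ := hSsep
      have hsub : {a | a ∈ 𝒢 ∧ ¬(x ∈ a ↔ x₀ ∈ a)} ⊆ ⋃ d ∈ D, Gd d := by
        rintro a ⟨ha𝒢, hne⟩
        have hpq : (∃ p ∈ S, p ∈ (φ a).1) ∧ (∃ q ∈ S, q ∉ (φ a).2) := by
          by_cases hxa : x ∈ a
          · have hx0a : x₀ ∉ a := fun h => hne ⟨fun _ => h, fun _ => hxa⟩
            exact ⟨⟨c x, hcxS, (hcprop x a ha𝒢).1 hxa⟩,
              ⟨c x₀, hcx0S, (hcprop x₀ a ha𝒢).2 hx0a⟩⟩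
          · have hx0a : x₀ ∈ a := by
              by_contra h
              exact hne ⟨fun h' => absurd h' hxa, fun h' => absurd h' h⟩
            exact ⟨⟨c x₀, hcx0S, (hcprop x₀ a ha𝒢).1 hx0a⟩,
              ⟨c x, hcxS, (hcprop x a ha𝒢).2 hxa⟩⟩
        obtain ⟨⟨p, hpS, hp1⟩, ⟨q, hqS, hq2⟩⟩ := hpq
        have hcover : S ⊆ (φ a).2 ∪ ((φ a).1)ᶜ := by
          intro s _
          by_cases h : s ∈ (φ a).1
          · exact Or.inl ((hpc a ha𝒢).2.2 h)
          · exact Or.inr h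
        obtain ⟨w, hwS, hw2, hw1⟩ := hSconn.isPreconnected (φ a).2 ((φ a).1)ᶜ ((hpc a ha𝒢).2.1)
          ((hpc a ha𝒢).1).isOpen_compl hcover
          ⟨p, hpS, (hpc a ha𝒢).2.2 hp1⟩
          ⟨q, hqS, fun h => hq2 ((hpc a ha𝒢).2.2 h)⟩
        have hwcl : w ∈ closure D := hSD hwS
        obtain ⟨e, heW, heD⟩ := mem_closure_iff.mp hwcl ((φ a).2 ∩ ((φ a).1)ᶜ)
          ((hpc a ha𝒢).2.1.inter ((hpc a ha𝒢).1).isOpen_compl) ⟨hw2, hw1⟩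
        exact Set.mem_biUnion heD ⟨ha𝒢, heW.1, heW.2⟩
      exact (hDc.biUnion fun d _ => hA d).mono hsub
    -- the embedding into a Σ-product
    set e : L → ↥𝒢 → ℝ :=
      fun x a => if (x ∈ (a : Set L)) ↔ (x₀ ∈ (a : Set L)) then 0 else 1 with he
    have hecont : Continuous e := by
      refine continuous_pi fun a => ?_
      have hcl : IsClopen {x : L | x ∈ (a : Set L) ↔ x₀ ∈ (a : Set L)} := by
        by_cases h0 : x₀ ∈ (a : Set L)
        · have heq : {x : L | x ∈ (a : Set L) ↔ x₀ ∈ (a : Set L)} = (a : Set L) := by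
            ext x; simp [h0]
          rw [heq]; exact hclopen _ a.2
        · have heq : {x : L | x ∈ (a : Set L) ↔ x₀ ∈ (a : Set L)} = ((a : Set L))ᶜ := by
            ext x; simp [h0]
          rw [heq]; exact (hclopen _ a.2).compl
      exact aux_cont_if hcl (0 : ℝ) 1
    have heinj : Function.Injective e := by
      intro x y hxy
      by_contra hne
      obtain ⟨a, ha𝒢, hcase⟩ := hsep x y hne
      have hfa := congrFun hxy (⟨a, ha𝒢⟩ : ↥𝒢)
      rcases hcase with ⟨hxa, hya⟩ | ⟨hya, hxa⟩ <;>
        by_cases h0 : x₀ ∈ a <;>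
        simp [e, hxa, hya, h0] at hfa
    have hsupp : ∀ x : L, {γ : ↥𝒢 | e x γ ≠ 0}.Countable := by
      intro x
      have hs : {γ : ↥𝒢 | e x γ ≠ 0} ⊆
          Subtype.val ⁻¹' {a | a ∈ 𝒢 ∧ ¬(x ∈ a ↔ x₀ ∈ a)} := by
        intro γ hγ
        refine ⟨γ.2, fun h => hγ ?_⟩
        simp [e, h]
      exact (((hcount x).preimage Subtype.coe_injective).mono hs)
    refine ⟨↥𝒢, Set.range e, isCompact_range hecont, ?_, ⟨?_⟩⟩
    · rintro _ ⟨x, rfl⟩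
      exact hsupp x
    · exact Continuous.homeoOfEquivCompactToT2 (f := Equiv.ofInjective e heinj)
        (hecont.subtype_mk _)
end

section
/- Let K, K₀ be compact Hausdorff spaces and L a compact zero-dimensional Hausdorff space. If L is a Boolean image of K and K is a continuous image of K₀ (there is a continuous surjection K₀ → K), then L is a Boolean image of K₀. Consequently, if L is a Boolean image of K, then L is a continuous image of every zero-dimensional compact Hausdorff space that maps continuously onto K. -/
open Set

open Set Topology

section Helpers

lemma fip_nonempty' {Z ι : Type*} [TopologicalSpace Z] [CompactSpace Z]
    (e : ι → Set Z) (hcl : ∀ a, IsClosed (e a))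
    (hfip : ∀ t : Finset ι, (⋂ a ∈ t, e a).Nonempty) :
    (⋂ a, e a).Nonempty := by
  by_contra h
  rw [Set.not_nonempty_iff_eq_empty] at h
  obtain ⟨t, ht⟩ := isCompact_univ.elim_finite_subfamily_closed e hcl (by simp [h])
  rw [Set.univ_inter] at ht
  exact (hfip t).ne_empty ht

lemma exists_clopen_between' {Z : Type*} [TopologicalSpace Z] [CompactSpace Z] [T2Space Z]
    [TotallyDisconnectedSpace Z] {C U : Set Z} (hC : IsClosed C) (hU : IsOpen U)
    (hCU : C ⊆ U) : ∃ V : Set Z, IsClopen V ∧ C ⊆ V ∧ V ⊆ U := by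
  choose V hV hxV hVU using fun x : C => compact_exists_isClopen_in_isOpen hU (hCU x.2)
  obtain ⟨t, ht⟩ := hC.isCompact.elim_finite_subcover V (fun x => (hV x).2)
    (fun x hx => mem_iUnion.2 ⟨⟨x, hx⟩, hxV _⟩)
  exact ⟨⋃ x ∈ t, V x, isClopen_biUnion_finset (fun x _ => hV x), ht,
    iUnion₂_subset fun x _ => hVU x⟩

lemma boolean_image_comp' {K K₀ L : Type*} [TopologicalSpace K] [TopologicalSpace K₀]
    [TopologicalSpace L]
    (hL : IsBooleanImage L K) (f : K₀ → K) (hf : Continuous f)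
    (hfsurj : Function.Surjective f) : IsBooleanImage L K₀ := by
  obtain ⟨𝒢, φ, hclopen, hsep, hinj, hpc, hiso⟩ := hL
  refine ⟨𝒢, fun a => (f ⁻¹' (φ a).1, f ⁻¹' (φ a).2), hclopen, hsep, ?_, ?_, ?_⟩
  · intro a ha b hb hab
    apply hinj ha hb
    obtain ⟨h1, h2⟩ := Prod.ext_iff.1 hab
    exact Prod.ext (hfsurj.preimage_injective h1) (hfsurj.preimage_injective h2)
  · intro a ha
    exact ⟨(hpc a ha).1.preimage hf, (hpc a ha).2.1.preimage hf,
      Set.preimage_mono (hpc a ha).2.2⟩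
  · intro F H hF hH hFG hHG hd
    obtain ⟨h1, h2⟩ := hiso F H hF hH hFG hHG hd
    have key : ∀ (u v : Set K × Set K → Set K),
        (⋂ a ∈ F, f ⁻¹' u (φ a)) \ (⋃ a ∈ H, f ⁻¹' v (φ a)) =
          f ⁻¹' ((⋂ a ∈ F, u (φ a)) \ (⋃ a ∈ H, v (φ a))) := by
      intro u v
      simp [Set.preimage_iInter, Set.preimage_iUnion, Set.preimage_diff]
    constructor
    · intro he
      have := key (fun p => p.2) (fun p => p.1)
      rw [this, h1 he, Set.preimage_empty]
    · intro he
      apply h2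
      have := key (fun p => p.1) (fun p => p.2)
      rw [this] at he
      rw [← Set.preimage_empty (f := f)] at he
      ext x
      simp only [Set.mem_empty_iff_false, iff_false]
      intro hx
      obtain ⟨z, rfl⟩ := hfsurj x
      have : z ∈ f ⁻¹' (∅ : Set K) := by
        rw [← he]; exact hx
      simp at this

end Helpers

lemma surj_of_boolean_image' {Z L : Type*} [TopologicalSpace Z] [TopologicalSpace L]
    [CompactSpace Z] [T2Space Z] [TotallyDisconnectedSpace Z]
    [CompactSpace L] [T2Space L]
    (hB : IsBooleanImage L Z) : ∃ h : Z → L, Continuous h ∧ Function.Surjective h := by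
  classical
  obtain ⟨𝒢, φ, hclopen, hsep, hinj, hpc, hiso⟩ := hB
  -- choose a clopen set between the pseudoclopen pair for each member of 𝒢
  have hex : ∀ s : Set L, ∃ u : Set Z, s ∈ 𝒢 → IsClopen u ∧ (φ s).1 ⊆ u ∧ u ⊆ (φ s).2 := by
    intro s
    by_cases hs : s ∈ 𝒢
    · obtain ⟨h1, h2, h3⟩ := hpc s hs
      obtain ⟨u, hu⟩ := exists_clopen_between' h1 h2 h3
      exact ⟨u, fun _ => hu⟩
    · exact ⟨∅, fun h => absurd h hs⟩
  choose c hc using hex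
  -- the closed family encoding where a point of Z should be sent
  set d : Z → {a : Set L // a ∈ 𝒢} → Set L :=
    fun z a => if z ∈ c a.1 then a.1 else (a.1)ᶜ with hd
  have hdclosed : ∀ z a, IsClosed (d z a) := by
    intro z a
    rw [hd]
    show IsClosed (if z ∈ c a.1 then a.1 else (a.1)ᶜ)
    split
    · exact (hclopen a.1 a.2).1
    · exact (hclopen a.1 a.2).2.isClosed_compl
  -- finite intersections of d z are nonempty
  have claimA : ∀ z, ∀ t : Finset {a : Set L // a ∈ 𝒢}, (⋂ a ∈ t, d z a).Nonempty := by
    intro z t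
    rw [Set.nonempty_iff_ne_empty]
    intro hemp
    set F : Set (Set L) := Subtype.val '' ((t : Set {a : Set L // a ∈ 𝒢}) ∩ {a | z ∈ c a.1}) with hF
    set H : Set (Set L) := Subtype.val '' ((t : Set {a : Set L // a ∈ 𝒢}) ∩ {a | z ∉ c a.1}) with hH
    have hFmem : ∀ s ∈ F, s ∈ 𝒢 ∧ z ∈ c s := by
      rintro s ⟨a, ⟨hat, hz⟩, rfl⟩; exact ⟨a.2, hz⟩
    have hHmem : ∀ s ∈ H, s ∈ 𝒢 ∧ z ∉ c s := by
      rintro s ⟨a, ⟨hat, hz⟩, rfl⟩; exact ⟨a.2, hz⟩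
    have hdisj : Disjoint F H := by
      rw [Set.disjoint_left]
      intro s hsF hsH
      exact (hHmem s hsH).2 (hFmem s hsF).2
    have h1 := (hiso F H ((t.finite_toSet.inter_of_left _).image _)
      ((t.finite_toSet.inter_of_left _).image _)
      (fun s hs => (hFmem s hs).1) (fun s hs => (hHmem s hs).1) hdisj).1
    have hprem : ⋂₀ F \ ⋃₀ H = ∅ := by
      rw [Set.eq_empty_iff_forall_notMem]
      intro x hx
      have hx' : x ∈ ⋂ a ∈ t, d z a := by
        rw [Set.mem_iInter₂]
        intro a hat
        rw [hd]
        by_cases hz : z ∈ c a.1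
        · simp only [if_pos hz]
          exact hx.1 a.1 ⟨a, ⟨hat, hz⟩, rfl⟩
        · simp only [if_neg hz]
          exact fun hxa => hx.2 ⟨a.1, ⟨a, ⟨hat, hz⟩, rfl⟩, hxa⟩
      rw [hemp] at hx'
      exact hx'
    have h2 := h1 hprem
    have hz' : z ∈ (⋂ s ∈ F, (φ s).2) \ (⋃ s ∈ H, (φ s).1) := by
      constructor
      · rw [Set.mem_iInter₂]
        intro s hs
        exact (hc s (hFmem s hs).1).2.2 (hFmem s hs).2
      · rw [Set.mem_iUnion₂]
        rintro ⟨s, hs, hzs⟩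
        exact (hHmem s hs).2 ((hc s (hHmem s hs).1).2.1 hzs)
    rw [h2] at hz'
    exact hz'
  -- the full intersection is a subsingleton
  have claimB : ∀ z, ∀ x ∈ ⋂ a, d z a, ∀ y ∈ ⋂ a, d z a, x = y := by
    intro z x hx y hy
    by_contra hne
    obtain ⟨a, ha, hcase⟩ := hsep x y hne
    have hxa := Set.mem_iInter.1 hx ⟨a, ha⟩
    have hya := Set.mem_iInter.1 hy ⟨a, ha⟩
    rw [hd] at hxa hya
    by_cases hz : z ∈ c a
    · simp only [if_pos hz] at hxa hya
      rcases hcase with ⟨_, h⟩ | ⟨_, h⟩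
      · exact h hya
      · exact h hxa
    · simp only [if_neg hz] at hxa hya
      rcases hcase with ⟨h, _⟩ | ⟨h, _⟩
      · exact hxa h
      · exact hya h
  have hexh : ∀ z, ∃ x, x ∈ ⋂ a, d z a :=
    fun z => fip_nonempty' (d z) (hdclosed z) (claimA z)
  choose h hh using hexh
  -- key membership property
  have hmem : ∀ z (a : Set L) (ha : a ∈ 𝒢), (h z ∈ a ↔ z ∈ c a) := by
    intro z a ha
    have := Set.mem_iInter.1 (hh z) ⟨a, ha⟩
    rw [hd] at this
    by_cases hz : z ∈ c a
    · simp only [if_pos hz] at this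
      exact ⟨fun _ => hz, fun _ => this⟩
    · simp only [if_neg hz] at this
      exact ⟨fun hza => absurd hza this, fun hz' => absurd hz' hz⟩
  refine ⟨h, ?_, ?_⟩
  · -- continuity
    rw [continuous_def]
    intro U hU
    rw [isOpen_iff_mem_nhds]
    intro z hz
    have hsub : Uᶜ ∩ ⋂ a, d z a = ∅ := by
      rw [Set.eq_empty_iff_forall_notMem]
      rintro x ⟨hxU, hxd⟩
      exact hxU (claimB z x hxd (h z) (hh z) ▸ hz)
    obtain ⟨t, ht⟩ := (hU.isClosed_compl.isCompact).elim_finite_subfamily_closed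
      (d z) (hdclosed z) hsub
    refine Filter.mem_of_superset (IsOpen.mem_nhds ?_ ?_ :
      (⋂ a ∈ t, (if z ∈ c a.1 then c a.1 else (c a.1)ᶜ)) ∈ 𝓝 z) ?_
    · apply isOpen_biInter_finset
      intro a _
      split
      · exact (hc a.1 a.2).1.2
      · exact (hc a.1 a.2).1.1.isOpen_compl
    · rw [Set.mem_iInter₂]
      intro a _
      split <;> simp_all
    · intro z' hz'
      have hmem' : h z' ∈ ⋂ a ∈ t, d z a := by
        rw [Set.mem_iInter₂]
        intro a hat
        have hz'a := Set.mem_iInter₂.1 hz' a hat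
        rw [hd]
        by_cases hzc : z ∈ c a.1
        · simp only [if_pos hzc] at hz'a ⊢
          exact (hmem z' a.1 a.2).2 hz'a
        · simp only [if_neg hzc] at hz'a ⊢
          exact fun hcon => hz'a ((hmem z' a.1 a.2).1 hcon)
      by_contra hcon
      have : h z' ∈ Uᶜ ∩ ⋂ a ∈ t, d z a := ⟨hcon, hmem'⟩
      rw [ht] at this
      exact this
  · -- surjectivity
    intro x
    set e : {a : Set L // a ∈ 𝒢} → Set Z :=
      fun a => if x ∈ a.1 then c a.1 else (c a.1)ᶜ with he
    have heclosed : ∀ a, IsClosed (e a) := by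
      intro a
      rw [he]
      show IsClosed (if x ∈ a.1 then c a.1 else (c a.1)ᶜ)
      split
      · exact (hc a.1 a.2).1.1
      · exact (hc a.1 a.2).1.2.isClosed_compl
    have hfip : ∀ t : Finset {a : Set L // a ∈ 𝒢}, (⋂ a ∈ t, e a).Nonempty := by
      intro t
      rw [Set.nonempty_iff_ne_empty]
      intro hemp
      set F : Set (Set L) := Subtype.val '' ((t : Set {a : Set L // a ∈ 𝒢}) ∩ {a | x ∈ a.1}) with hF
      set H : Set (Set L) := Subtype.val '' ((t : Set {a : Set L // a ∈ 𝒢}) ∩ {a | x ∉ a.1}) with hH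
      have hFmem : ∀ s ∈ F, s ∈ 𝒢 ∧ x ∈ s := by
        rintro s ⟨a, ⟨hat, hz⟩, rfl⟩; exact ⟨a.2, hz⟩
      have hHmem : ∀ s ∈ H, s ∈ 𝒢 ∧ x ∉ s := by
        rintro s ⟨a, ⟨hat, hz⟩, rfl⟩; exact ⟨a.2, hz⟩
      have hdisj : Disjoint F H := by
        rw [Set.disjoint_left]
        intro s hsF hsH
        exact (hHmem s hsH).2 (hFmem s hsF).2
      have h2 := (hiso F H ((t.finite_toSet.inter_of_left _).image _)
        ((t.finite_toSet.inter_of_left _).image _)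
        (fun s hs => (hFmem s hs).1) (fun s hs => (hHmem s hs).1) hdisj).2
      have hprem : (⋂ s ∈ F, (φ s).1) \ (⋃ s ∈ H, (φ s).2) = ∅ := by
        rw [Set.eq_empty_iff_forall_notMem]
        rintro w ⟨hw1, hw2⟩
        have hw' : w ∈ ⋂ a ∈ t, e a := by
          rw [Set.mem_iInter₂]
          intro a hat
          rw [he]
          by_cases hxa : x ∈ a.1
          · simp only [if_pos hxa]
            exact (hc a.1 a.2).2.1 (Set.mem_iInter₂.1 hw1 a.1 ⟨a, ⟨hat, hxa⟩, rfl⟩)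
          · simp only [if_neg hxa]
            intro hwc
            exact hw2 (Set.mem_iUnion₂.2 ⟨a.1, ⟨a, ⟨hat, hxa⟩, rfl⟩, (hc a.1 a.2).2.2 hwc⟩)
        rw [hemp] at hw'
        exact hw'
      have h3 := h2 hprem
      rw [Set.eq_empty_iff_forall_notMem] at h3
      apply h3 x
      constructor
      · rw [Set.mem_sInter]
        intro s hs
        exact (hFmem s hs).2
      · rintro ⟨s, hs, hxs⟩
        exact (hHmem s hs).2 hxs
    obtain ⟨z, hzmem⟩ := fip_nonempty' e heclosed hfip
    refine ⟨z, ?_⟩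
    have hxmem : x ∈ ⋂ a, d z a := by
      rw [Set.mem_iInter]
      intro a
      have hze := Set.mem_iInter.1 hzmem a
      rw [he] at hze
      rw [hd]
      by_cases hxa : x ∈ a.1
      · simp only [if_pos hxa] at hze
        simp only [if_pos hze]
        exact hxa
      · simp only [if_neg hxa] at hze
        simp only [if_neg hze]
        exact hxa
    exact claimB z (h z) (hh z) x hxmem

/-- If `L` is a Boolean image of `K` and `K` is a continuous image
of `K₀`, then `L` is a Boolean image of `K₀`; consequently `L` is a continuous
image of every zero-dimensional compact Hausdorff space mapping onto `K`. -/
theorem boolean_image_of_preimage {K K₀ L : Type*}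
    [TopologicalSpace K] [TopologicalSpace K₀] [TopologicalSpace L]
    [CompactSpace K] [T2Space K] [CompactSpace K₀] [T2Space K₀]
    [CompactSpace L] [T2Space L] [TotallyDisconnectedSpace L]
    (hL : IsBooleanImage L K) (f : K₀ → K) (hf : Continuous f)
    (hfsurj : Function.Surjective f) :
    IsBooleanImage L K₀ ∧
      ∀ (Z : Type*) [TopologicalSpace Z] [CompactSpace Z] [T2Space Z]
        [TotallyDisconnectedSpace Z],
        (∃ g : Z → K, Continuous g ∧ Function.Surjective g) →
        ∃ h : Z → L, Continuous h ∧ Function.Surjective h := by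
  refine ⟨boolean_image_comp' hL f hf hfsurj, ?_⟩
  rintro Z _ _ _ _ ⟨g, hg, hgsurj⟩
  exact surj_of_boolean_image' (boolean_image_comp' hL g hg hgsurj)
end

section
/- Let K be a compact Hausdorff space and L a compact zero-dimensional Hausdorff space. If L is a Boolean image of K, then L is a continuous image of a closed subspace of K, i.e., there exist a closed set K₀ ⊆ K and a continuous surjection f : K₀ → L. -/
open Set

/-- If `L` is a Boolean image of `K`, then `L` is a continuous
image of a closed subspace of `K`. -/
theorem continuous_image_of_closed_subspace {K L : Type*}
    [TopologicalSpace K] [CompactSpace K] [T2Space K]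
    [TopologicalSpace L] [CompactSpace L] [T2Space L] [TotallyDisconnectedSpace L]
    (hL : IsBooleanImage L K) :
    ∃ K₀ : Set K, IsClosed K₀ ∧ ∃ f : K₀ → L, Continuous f ∧ Function.Surjective f := by
  classical
  obtain ⟨𝒢, φ, hclopen, hsep, hiso'⟩ := hL
  obtain ⟨_hinj, hpc, hiso⟩ := hiso'
  have hcl : ∀ a ∈ 𝒢, IsClosed (φ a).1 := fun a ha => (hpc a ha).1
  have hop : ∀ a ∈ 𝒢, IsOpen (φ a).2 := fun a ha => (hpc a ha).2.1
  have hsub : ∀ a ∈ 𝒢, (φ a).1 ⊆ (φ a).2 := fun a ha => (hpc a ha).2.2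
  -- uniqueness of the point of L attached to x
  have huniq : ∀ (x : K) (y₁ y₂ : L), (∀ a ∈ 𝒢, (y₁ ∈ a ↔ x ∈ (φ a).1)) →
      (∀ a ∈ 𝒢, (y₂ ∈ a ↔ x ∈ (φ a).1)) → y₁ = y₂ := by
    intro x y₁ y₂ h1 h2
    by_contra hne
    obtain ⟨a, ha, hc⟩ := hsep y₁ y₂ hne
    rcases hc with ⟨ha1, ha2⟩ | ⟨ha1, ha2⟩
    · exact ha2 ((h2 a ha).2 ((h1 a ha).1 ha1))
    · exact ha2 ((h1 a ha).2 ((h2 a ha).1 ha1))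
  -- existence of a point of L attached to every x
  have hexy : ∀ x : K, ∃ y : L, ∀ a ∈ 𝒢, (y ∈ a ↔ x ∈ (φ a).1) := by
    intro x
    set D : 𝒢 → Set L := fun i => if x ∈ (φ i.1).1 then (i.1 : Set L) else (i.1 : Set L)ᶜ with hD
    have hDc : ∀ i, IsClosed (D i) := by
      intro i
      rw [hD]; dsimp only
      split_ifs
      · exact (hclopen i.1 i.2).1
      · exact (hclopen i.1 i.2).compl.1
    have hne : (⋂ i, D i).Nonempty := by
      by_contra hcon
      rw [not_nonempty_iff_eq_empty] at hcon
      obtain ⟨t, ht⟩ := isCompact_univ.elim_finite_subfamily_closed D hDc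
        (by rw [univ_inter, hcon])
      rw [univ_inter] at ht
      set F : Set (Set L) := Subtype.val '' {i : 𝒢 | i ∈ t ∧ x ∈ (φ i.1).1} with hF
      set Hs : Set (Set L) := Subtype.val '' {i : 𝒢 | i ∈ t ∧ x ∉ (φ i.1).1} with hHs
      have hFf : F.Finite := (t.finite_toSet.subset fun i hi => hi.1).image _
      have hHf : Hs.Finite := (t.finite_toSet.subset fun i hi => hi.1).image _
      have hFG : F ⊆ 𝒢 := by rintro a ⟨i, hi, rfl⟩; exact i.2
      have hHG : Hs ⊆ 𝒢 := by rintro a ⟨i, hi, rfl⟩; exact i.2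
      have hdisj : Disjoint F Hs := by
        rw [Set.disjoint_left]
        rintro a ⟨i, hi, rfl⟩ ⟨j, hj, hji⟩
        obtain rfl := Subtype.ext hji
        exact hj.2 hi.2
      have hkey := hiso F Hs hFf hHf hFG hHG hdisj
      have hempty : ⋂₀ F \ ⋃₀ Hs = ∅ := by
        rw [eq_empty_iff_forall_notMem]
        intro y hy
        have hyt : y ∈ ⋂ i ∈ t, D i := by
          refine mem_iInter₂.2 fun i hi => ?_
          rw [hD]; dsimp only
          split_ifs with hxi
          · exact hy.1 _ ⟨i, ⟨hi, hxi⟩, rfl⟩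
          · simp only [mem_compl_iff]
            intro hyi
            exact hy.2 ⟨(i : Set L), ⟨i, ⟨hi, hxi⟩, rfl⟩, hyi⟩
        rw [ht] at hyt
        exact hyt
      have h1 := hkey.1 hempty
      have hx : x ∈ (⋂ a ∈ F, (φ a).2) \ ⋃ a ∈ Hs, (φ a).1 := by
        constructor
        · refine mem_iInter₂.2 ?_
          rintro a ⟨i, ⟨hi, hxi⟩, rfl⟩
          exact hsub _ i.2 hxi
        · intro hxu
          obtain ⟨a, haH, hxa⟩ := mem_iUnion₂.1 hxu
          obtain ⟨i, ⟨hi, hxi⟩, rfl⟩ := haH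
          exact hxi hxa
      rw [h1] at hx
      exact hx
    obtain ⟨y, hy⟩ := hne
    refine ⟨y, fun a ha => ?_⟩
    have h := mem_iInter.1 hy ⟨a, ha⟩
    rw [hD] at h; dsimp only at h
    split_ifs at h with hxa
    · exact ⟨fun _ => hxa, fun _ => h⟩
    · exact ⟨fun hya => absurd hya h, fun hx => absurd hx hxa⟩
  -- existence of a point of K attached to every y
  have hexx : ∀ y : L, ∃ x : K, ∀ a ∈ 𝒢, (y ∈ a → x ∈ (φ a).1) ∧ (y ∉ a → x ∉ (φ a).2) := by
    intro y
    set Z : 𝒢 → Set K := fun i => if y ∈ (i.1 : Set L) then (φ i.1).1 else ((φ i.1).2)ᶜ with hZ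
    have hZc : ∀ i, IsClosed (Z i) := by
      intro i
      rw [hZ]; dsimp only
      split_ifs
      · exact hcl i.1 i.2
      · exact (hop i.1 i.2).isClosed_compl
    have hne : (⋂ i, Z i).Nonempty := by
      by_contra hcon
      rw [not_nonempty_iff_eq_empty] at hcon
      obtain ⟨t, ht⟩ := isCompact_univ.elim_finite_subfamily_closed Z hZc
        (by rw [univ_inter, hcon])
      rw [univ_inter] at ht
      set F : Set (Set L) := Subtype.val '' {i : 𝒢 | i ∈ t ∧ y ∈ (i.1 : Set L)} with hF
      set Hs : Set (Set L) := Subtype.val '' {i : 𝒢 | i ∈ t ∧ y ∉ (i.1 : Set L)} with hHs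
      have hFf : F.Finite := (t.finite_toSet.subset fun i hi => hi.1).image _
      have hHf : Hs.Finite := (t.finite_toSet.subset fun i hi => hi.1).image _
      have hFG : F ⊆ 𝒢 := by rintro a ⟨i, hi, rfl⟩; exact i.2
      have hHG : Hs ⊆ 𝒢 := by rintro a ⟨i, hi, rfl⟩; exact i.2
      have hdisj : Disjoint F Hs := by
        rw [Set.disjoint_left]
        rintro a ⟨i, hi, rfl⟩ ⟨j, hj, hji⟩
        obtain rfl := Subtype.ext hji
        exact hj.2 hi.2
      have hkey := hiso F Hs hFf hHf hFG hHG hdisj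
      have hyF : y ∈ ⋂₀ F \ ⋃₀ Hs := by
        constructor
        · rintro a ⟨i, ⟨hi, hyi⟩, rfl⟩; exact hyi
        · rintro ⟨a, ⟨i, ⟨hi, hyi⟩, rfl⟩, hya⟩; exact hyi hya
      have hcomb : (⋂ a ∈ F, (φ a).1) \ ⋃ a ∈ Hs, (φ a).2 ≠ ∅ := by
        intro h
        have := hkey.2 h
        rw [this] at hyF
        exact hyF
      obtain ⟨z, hz⟩ := nonempty_iff_ne_empty.2 hcomb
      have hzt : z ∈ ⋂ i ∈ t, Z i := by
        refine mem_iInter₂.2 fun i hi => ?_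
        rw [hZ]; dsimp only
        split_ifs with hyi
        · exact mem_iInter₂.1 hz.1 _ ⟨i, ⟨hi, hyi⟩, rfl⟩
        · simp only [mem_compl_iff]
          intro hz2
          exact hz.2 (mem_iUnion₂.2 ⟨(i : Set L), ⟨i, ⟨hi, hyi⟩, rfl⟩, hz2⟩)
      rw [ht] at hzt
      exact hzt
    obtain ⟨x, hx⟩ := hne
    refine ⟨x, fun a ha => ?_⟩
    have h := mem_iInter.1 hx ⟨a, ha⟩
    rw [hZ] at h; dsimp only at h
    split_ifs at h with hya
    · exact ⟨fun _ => h, fun hy' => absurd hya hy'⟩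
    · exact ⟨fun hy' => absurd hy' hya, fun _ => h⟩
  -- the map
  choose g hg using hexy
  refine ⟨{x : K | ∀ a ∈ 𝒢, x ∈ (φ a).2 → x ∈ (φ a).1}, ?_, fun x => g x.1, ?_, ?_⟩
  · have : {x : K | ∀ a ∈ 𝒢, x ∈ (φ a).2 → x ∈ (φ a).1}
        = ⋂ a ∈ 𝒢, ((φ a).1 ∪ ((φ a).2)ᶜ) := by
      ext x
      simp only [mem_setOf_eq, mem_iInter, mem_union, mem_compl_iff]
      constructor
      · intro h a ha
        by_cases h2 : x ∈ (φ a).2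
        · exact Or.inl (h a ha h2)
        · exact Or.inr h2
      · intro h a ha h2
        rcases h a ha with h1 | h1
        · exact h1
        · exact absurd h2 h1
    rw [this]
    exact isClosed_biInter fun a ha => (hcl a ha).union (hop a ha).isClosed_compl
  · -- continuity
    set S : Set (Set L) := {s | ∃ a ∈ 𝒢, s = a ∨ s = aᶜ} with hS
    have hSopen : ∀ s ∈ S, IsOpen s := by
      rintro s ⟨a, ha, h | h⟩
      · rw [h]; exact (hclopen a ha).2
      · rw [h]; exact (hclopen a ha).compl.2
    have hle : ‹TopologicalSpace L› ≤ TopologicalSpace.generateFrom S := le_generateFrom hSopen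
    have hT2 : @T2Space L (TopologicalSpace.generateFrom S) := by
      refine @T2Space.mk L (TopologicalSpace.generateFrom S) fun x y hxy => ?_
      obtain ⟨a, ha, hc⟩ := hsep x y hxy
      rcases hc with ⟨h1, h2⟩ | ⟨h1, h2⟩
      · exact ⟨a, aᶜ, TopologicalSpace.isOpen_generateFrom_of_mem ⟨a, ha, Or.inl rfl⟩,
          TopologicalSpace.isOpen_generateFrom_of_mem ⟨a, ha, Or.inr rfl⟩, h1, h2, disjoint_compl_right⟩
      · exact ⟨aᶜ, a, TopologicalSpace.isOpen_generateFrom_of_mem ⟨a, ha, Or.inr rfl⟩,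
          TopologicalSpace.isOpen_generateFrom_of_mem ⟨a, ha, Or.inl rfl⟩, h2, h1, disjoint_compl_left⟩
    have heq : ‹TopologicalSpace L› = TopologicalSpace.generateFrom S := by
      refine le_antisymm hle ?_
      rw [TopologicalSpace.le_def]
      intro u hu
      rw [← @isClosed_compl_iff L (TopologicalSpace.generateFrom S)]
      have hcompact : IsCompact uᶜ := hu.isClosed_compl.isCompact
      have hcont_id : @Continuous L L ‹_› (TopologicalSpace.generateFrom S) id := continuous_id_iff_le.2 hle
      have hcompact' : @IsCompact L (TopologicalSpace.generateFrom S) uᶜ := by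
        have := @IsCompact.image L L ‹_› (TopologicalSpace.generateFrom S) uᶜ id hcompact hcont_id
        rwa [image_id] at this
      exact @IsCompact.isClosed L (TopologicalSpace.generateFrom S) hT2 _ hcompact'
    have hcf : @Continuous _ L _ (TopologicalSpace.generateFrom S) (fun x : {x : K | ∀ a ∈ 𝒢, x ∈ (φ a).2 → x ∈ (φ a).1} => g x.1) := by
      refine continuous_generateFrom_iff.2 ?_
      rintro s ⟨a, ha, h | h⟩
      · rw [h]
        have hpre : (fun x : {x : K | ∀ a ∈ 𝒢, x ∈ (φ a).2 → x ∈ (φ a).1} => g x.1) ⁻¹' a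
            = Subtype.val ⁻¹' (φ a).2 := by
          ext x
          simp only [mem_preimage]
          constructor
          · intro h; exact hsub a ha ((hg x.1 a ha).1 h)
          · intro h; exact (hg x.1 a ha).2 (x.2 a ha h)
        rw [hpre]
        exact (hop a ha).preimage continuous_subtype_val
      · rw [h]
        have hpre : (fun x : {x : K | ∀ a ∈ 𝒢, x ∈ (φ a).2 → x ∈ (φ a).1} => g x.1) ⁻¹' aᶜ
            = Subtype.val ⁻¹' ((φ a).1)ᶜ := by
          ext x
          simp only [mem_preimage, mem_compl_iff]
          exact not_congr (hg x.1 a ha)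
        rw [hpre]
        exact (hcl a ha).isOpen_compl.preimage continuous_subtype_val
    rw [continuous_iff_coinduced_le] at hcf ⊢
    rw [heq]
    exact hcf
  · -- surjectivity
    intro y
    obtain ⟨x, hx⟩ := hexx y
    have hx0 : x ∈ {x : K | ∀ a ∈ 𝒢, x ∈ (φ a).2 → x ∈ (φ a).1} := by
      intro a ha h2
      by_cases hy : y ∈ a
      · exact (hx a ha).1 hy
      · exact absurd h2 ((hx a ha).2 hy)
    refine ⟨⟨x, hx0⟩, ?_⟩
    refine huniq x _ y (hg x) fun a ha => ?_
    constructor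
    · intro hy
      by_contra hx1
      by_cases hy' : y ∈ a
      · exact hx1 ((hx a ha).1 hy')
      · exact hy' hy
    · intro hx1
      by_contra hy
      exact (hx a ha).2 hy (hsub a ha hx1)
end

section
/- Let I be an index set, and for each i ∈ I let Kᵢ be a compact Hausdorff space and Lᵢ a compact zero-dimensional Hausdorff space such that Lᵢ is a Boolean image of Kᵢ. Then the product L = ∏_{i∈I} Lᵢ is a Boolean image of the product K = ∏_{i∈I} Kᵢ. -/
open Set

lemma cyl_const_of_ne {ι : Type*} {X : ι → Type*} [∀ i, Nonempty (X i)] {i j : ι}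
    {A : Set (X i)} {B : Set (X j)} (hij : i ≠ j)
    (h : (fun x : ∀ k, X k => x i) ⁻¹' A = (fun x : ∀ k, X k => x j) ⁻¹' B) :
    A = ∅ ∨ A = univ := by
  classical
  by_contra hc
  push_neg at hc
  obtain ⟨hA0, hAu⟩ := hc
  obtain ⟨a, ha⟩ := hA0
  obtain ⟨a', ha'⟩ : ∃ a', a' ∉ A := by
    by_contra hc'; push_neg at hc'; exact hAu (eq_univ_of_forall hc')
  set x : ∀ k, X k := Function.update (fun k => Classical.arbitrary _) i a with hxdef
  have hxi : x i = a := Function.update_self _ _ _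
  have hxB : x j ∈ B := by
    have hx : x ∈ (fun x : ∀ k, X k => x i) ⁻¹' A := by
      simp only [mem_preimage, hxi]; exact ha
    rw [h] at hx; exact hx
  set x' : ∀ k, X k := Function.update x i a' with hx'def
  have hx'i : x' i = a' := Function.update_self _ _ _
  have hx'j : x' j = x j := Function.update_of_ne (Ne.symm hij) _ _
  have hx'B : x' ∈ (fun x : ∀ k, X k => x j) ⁻¹' B := by
    simp only [mem_preimage, hx'j]; exact hxB
  rw [← h] at hx'B
  simp only [mem_preimage, hx'i] at hx'B
  exact ha' hx'B

/-- Products of Boolean images are Boolean images of products. -/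
theorem boolean_image_pi {I : Type*} (K L : I → Type*)
    [∀ i, TopologicalSpace (K i)] [∀ i, TopologicalSpace (L i)]
    [∀ i, CompactSpace (K i)] [∀ i, T2Space (K i)]
    [∀ i, CompactSpace (L i)] [∀ i, T2Space (L i)] [∀ i, TotallyDisconnectedSpace (L i)]
    (h : ∀ i, IsBooleanImage (L i) (K i)) :
    IsBooleanImage (∀ i, L i) (∀ i, K i) := by
  classical
  choose 𝒢 φ hclopen hsep hiso using h
  have hinj : ∀ i, Set.InjOn (φ i) (𝒢 i) := fun i => (hiso i).1
  have hpc : ∀ i, ∀ a ∈ 𝒢 i, IsClosed (φ i a).1 ∧ IsOpen (φ i a).2 ∧ (φ i a).1 ⊆ (φ i a).2 :=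
    fun i => (hiso i).2.1
  have hcond := fun i => (hiso i).2.2
  by_cases hne : ∀ i, Nonempty (L i)
  · -- main case
    have hKne : ∀ i, Nonempty (K i) := by
      intro i
      by_contra hKe
      have hKE : IsEmpty (K i) := not_nonempty_iff.mp hKe
      have h2 := (hcond i ∅ ∅ finite_empty finite_empty (empty_subset _) (empty_subset _)
        disjoint_bot_left).2 (Set.eq_empty_of_isEmpty _)
      simp only [sInter_empty, sUnion_empty, diff_empty] at h2
      exact (hne i).elim fun x => (h2 ▸ (mem_univ x) : x ∈ (∅ : Set (L i)))
    set G : ∀ i, Set (Set (L i)) := fun i => {a | a ∈ 𝒢 i ∧ a ≠ ∅ ∧ a ≠ univ} with hGdef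
    have hG𝒢 : ∀ i, G i ⊆ 𝒢 i := fun i a ha => ha.1
    set cyl : ∀ i, Set (L i) → Set (∀ i, L i) := fun i a => (fun x => x i) ⁻¹' a with hcyldef
    set cylK : ∀ i, Set (K i) → Set (∀ i, K i) := fun i A => (fun x => x i) ⁻¹' A with hcylKdef
    have hcylinj : ∀ i, Function.Injective (cyl i) :=
      fun i => Function.Surjective.preimage_injective (Function.surjective_eval i)
    have hcylKinj : ∀ i, Function.Injective (cylK i) :=
      fun i => Function.Surjective.preimage_injective (Function.surjective_eval i)
    -- injectivity of the encoding
    have key : ∀ (p q : Σ i, Set (L i)), p.2 ∈ G p.1 → q.2 ∈ G q.1 →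
        cyl p.1 p.2 = cyl q.1 q.2 → p = q := by
      rintro ⟨i, a⟩ ⟨j, b⟩ hpa hqb hcyl
      by_cases hij : i = j
      · subst hij
        have : a = b := hcylinj i hcyl
        rw [this]
      · rcases cyl_const_of_ne hij hcyl with h0 | hu
        · exact absurd h0 hpa.2.1
        · exact absurd hu hpa.2.2
    -- nontriviality of pseudoclopens
    have ne1 : ∀ i, ∀ a ∈ G i, (φ i a).1 ≠ ∅ := by
      intro i a ha h0
      have h2 := (hcond i {a} ∅ (finite_singleton a) finite_empty
        (singleton_subset_iff.mpr ha.1) (empty_subset _) disjoint_bot_right).2 (by simp [h0])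
      simp only [sInter_singleton, sUnion_empty, diff_empty] at h2
      exact ha.2.1 h2
    have ne2 : ∀ i, ∀ a ∈ G i, (φ i a).2 ≠ univ := by
      intro i a ha hu
      have h2 := (hcond i ∅ {a} finite_empty (finite_singleton a)
        (empty_subset _) (singleton_subset_iff.mpr ha.1) disjoint_bot_left).2 (by simp [hu])
      simp only [sInter_empty, sUnion_singleton] at h2
      exact ha.2.2 (univ_subset_iff.mp (diff_eq_empty.mp h2))
    set 𝒢' : Set (Set (∀ i, L i)) := {S | ∃ p : Σ i, Set (L i), p.2 ∈ G p.1 ∧ S = cyl p.1 p.2}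
      with h𝒢'def
    set Φ : Set (∀ i, L i) → Set (∀ i, K i) × Set (∀ i, K i) := fun S =>
      if hS : ∃ p : Σ i, Set (L i), p.2 ∈ G p.1 ∧ S = cyl p.1 p.2 then
        (cylK hS.choose.1 (φ hS.choose.1 hS.choose.2).1,
         cylK hS.choose.1 (φ hS.choose.1 hS.choose.2).2)
      else (∅, ∅) with hΦdef
    have hΦeq : ∀ i, ∀ a ∈ G i,
        Φ (cyl i a) = (cylK i (φ i a).1, cylK i (φ i a).2) := by
      intro i a ha
      have hS : ∃ p : Σ i, Set (L i), p.2 ∈ G p.1 ∧ cyl i a = cyl p.1 p.2 :=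
        ⟨⟨i, a⟩, ha, rfl⟩
      have hq := hS.choose_spec
      have : hS.choose = ⟨i, a⟩ := key _ _ hq.1 ha hq.2.symm
      simp only [hΦdef, dif_pos hS]
      rw [this]
    refine ⟨𝒢', Φ, ?_, ?_, ?_, ?_, ?_⟩
    · rintro S ⟨⟨i, a⟩, ha, rfl⟩
      exact (hclopen i a ha.1).preimage (continuous_apply i)
    · -- separation
      intro x y hxy
      obtain ⟨i, hi⟩ := Function.ne_iff.mp hxy
      obtain ⟨a, ha, hsep'⟩ := hsep i (x i) (y i) hi
      rcases hsep' with ⟨hxa, hya⟩ | ⟨hya, hxa⟩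
      · have haG : a ∈ G i := ⟨ha, Set.Nonempty.ne_empty ⟨_, hxa⟩,
          fun hu => hya (hu ▸ mem_univ _)⟩
        exact ⟨cyl i a, ⟨⟨i, a⟩, haG, rfl⟩, Or.inl ⟨hxa, hya⟩⟩
      · have haG : a ∈ G i := ⟨ha, Set.Nonempty.ne_empty ⟨_, hya⟩,
          fun hu => hxa (hu ▸ mem_univ _)⟩
        exact ⟨cyl i a, ⟨⟨i, a⟩, haG, rfl⟩, Or.inr ⟨hya, hxa⟩⟩
    · -- InjOn Φ
      rintro S ⟨⟨i, a⟩, ha, rfl⟩ T ⟨⟨j, b⟩, hb, rfl⟩ hΦST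
      rw [hΦeq i a ha, hΦeq j b hb] at hΦST
      have h1 : cylK i (φ i a).1 = cylK j (φ j b).1 := congrArg Prod.fst hΦST
      have h2 : cylK i (φ i a).2 = cylK j (φ j b).2 := congrArg Prod.snd hΦST
      by_cases hij : i = j
      · subst hij
        have e1 : (φ i a).1 = (φ i b).1 := hcylKinj i h1
        have e2 : (φ i a).2 = (φ i b).2 := hcylKinj i h2
        have : φ i a = φ i b := Prod.ext e1 e2
        rw [hinj i ha.1 hb.1 this]
      · rcases cyl_const_of_ne hij h1 with h0 | hu
        · exact absurd h0 (ne1 i a ha)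
        · have : (φ i a).2 = univ :=
            univ_subset_iff.mp (hu ▸ (hpc i a ha.1).2.2)
          exact absurd this (ne2 i a ha)
    · -- pseudoclopens
      rintro S ⟨⟨i, a⟩, ha, rfl⟩
      rw [hΦeq i a ha]
      exact ⟨(hpc i a ha.1).1.preimage (continuous_apply i),
        (hpc i a ha.1).2.1.preimage (continuous_apply i),
        preimage_mono (hpc i a ha.1).2.2⟩
    · -- main combinatorial condition
      intro F H hFfin hHfin hF𝒢 hH𝒢 hdisj
      set Fi : ∀ i, Set (Set (L i)) := fun i => {a | a ∈ G i ∧ cyl i a ∈ F} with hFidef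
      set Hi : ∀ i, Set (Set (L i)) := fun i => {a | a ∈ G i ∧ cyl i a ∈ H} with hHidef
      have hFifin : ∀ i, (Fi i).Finite := by
        intro i
        refine Set.Finite.subset (Set.Finite.preimage ((hcylinj i).injOn) hFfin) ?_
        intro a ha; exact ha.2
      have hHifin : ∀ i, (Hi i).Finite := by
        intro i
        refine Set.Finite.subset (Set.Finite.preimage ((hcylinj i).injOn) hHfin) ?_
        intro a ha; exact ha.2
      have hFi𝒢 : ∀ i, Fi i ⊆ 𝒢 i := fun i a ha => ha.1.1
      have hHi𝒢 : ∀ i, Hi i ⊆ 𝒢 i := fun i a ha => ha.1.1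
      have hdisji : ∀ i, Disjoint (Fi i) (Hi i) := by
        intro i
        rw [Set.disjoint_left]
        intro a haF haH
        exact (Set.disjoint_left.mp hdisj) haF.2 haH.2
      have hFmem : ∀ S, S ∈ F ↔ ∃ i, ∃ a ∈ Fi i, S = cyl i a := by
        intro S
        constructor
        · intro hS
          obtain ⟨⟨i, a⟩, ha, rfl⟩ := hF𝒢 hS
          exact ⟨i, a, ⟨ha, hS⟩, rfl⟩
        · rintro ⟨i, a, ha, rfl⟩; exact ha.2
      have hHmem : ∀ S, S ∈ H ↔ ∃ i, ∃ a ∈ Hi i, S = cyl i a := by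
        intro S
        constructor
        · intro hS
          obtain ⟨⟨i, a⟩, ha, rfl⟩ := hH𝒢 hS
          exact ⟨i, a, ⟨ha, hS⟩, rfl⟩
        · rintro ⟨i, a, ha, rfl⟩; exact ha.2
      have hLset : ⋂₀ F \ ⋃₀ H = univ.pi (fun i => ⋂₀ (Fi i) \ ⋃₀ (Hi i)) := by
        ext x
        simp only [mem_diff, mem_sInter, mem_sUnion, mem_univ_pi]
        constructor
        · rintro ⟨h1, h2⟩ i
          constructor
          · exact fun a haF => h1 _ ((hFmem _).mpr ⟨i, a, haF, rfl⟩)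
          · rintro ⟨a, haH, hxa⟩
            exact h2 ⟨cyl i a, (hHmem _).mpr ⟨i, a, haH, rfl⟩, hxa⟩
        · intro hall
          constructor
          · intro S hS
            obtain ⟨i, a, haF, rfl⟩ := (hFmem S).mp hS
            exact (hall i).1 a haF
          · rintro ⟨S, hS, hxS⟩
            obtain ⟨i, a, haH, rfl⟩ := (hHmem S).mp hS
            exact (hall i).2 ⟨a, haH, hxS⟩
      have hKset2 : (⋂ a ∈ F, (Φ a).2) \ (⋃ a ∈ H, (Φ a).1)
          = univ.pi (fun i => (⋂ a ∈ Fi i, (φ i a).2) \ (⋃ a ∈ Hi i, (φ i a).1)) := by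
        ext x
        simp only [mem_diff, mem_iInter₂, mem_iUnion₂, mem_univ_pi, not_exists]
        constructor
        · rintro ⟨h1, h2⟩ i
          refine ⟨fun a haF => ?_, fun a haH hx => ?_⟩
          · have := h1 _ ((hFmem _).mpr ⟨i, a, haF, rfl⟩)
            rw [hΦeq i a haF.1] at this
            exact this
          · have := h2 _ ((hHmem _).mpr ⟨i, a, haH, rfl⟩)
            rw [hΦeq i a haH.1] at this
            exact this hx
        · intro hall
          constructor
          · intro S hS
            obtain ⟨i, a, haF, rfl⟩ := (hFmem S).mp hS
            rw [hΦeq i a haF.1]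
            exact (hall i).1 a haF
          · intro S hS
            obtain ⟨i, a, haH, rfl⟩ := (hHmem S).mp hS
            rw [hΦeq i a haH.1]
            exact (hall i).2 a haH
      have hKset1 : (⋂ a ∈ F, (Φ a).1) \ (⋃ a ∈ H, (Φ a).2)
          = univ.pi (fun i => (⋂ a ∈ Fi i, (φ i a).1) \ (⋃ a ∈ Hi i, (φ i a).2)) := by
        ext x
        simp only [mem_diff, mem_iInter₂, mem_iUnion₂, mem_univ_pi, not_exists]
        constructor
        · rintro ⟨h1, h2⟩ i
          refine ⟨fun a haF => ?_, fun a haH hx => ?_⟩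
          · have := h1 _ ((hFmem _).mpr ⟨i, a, haF, rfl⟩)
            rw [hΦeq i a haF.1] at this
            exact this
          · have := h2 _ ((hHmem _).mpr ⟨i, a, haH, rfl⟩)
            rw [hΦeq i a haH.1] at this
            exact this hx
        · intro hall
          constructor
          · intro S hS
            obtain ⟨i, a, haF, rfl⟩ := (hFmem S).mp hS
            rw [hΦeq i a haF.1]
            exact (hall i).1 a haF
          · intro S hS
            obtain ⟨i, a, haH, rfl⟩ := (hHmem S).mp hS
            rw [hΦeq i a haH.1]
            exact (hall i).2 a haH
      constructor
      · intro h0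
        rw [hLset] at h0
        obtain ⟨i, hi⟩ := Set.univ_pi_eq_empty_iff.mp h0
        have := (hcond i (Fi i) (Hi i) (hFifin i) (hHifin i) (hFi𝒢 i) (hHi𝒢 i)
          (hdisji i)).1 hi
        rw [hKset2]
        exact Set.univ_pi_eq_empty_iff.mpr ⟨i, this⟩
      · intro h0
        rw [hKset1] at h0
        obtain ⟨i, hi⟩ := Set.univ_pi_eq_empty_iff.mp h0
        have := (hcond i (Fi i) (Hi i) (hFifin i) (hHifin i) (hFi𝒢 i) (hHi𝒢 i)
          (hdisji i)).2 hi
        rw [hLset]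
        exact Set.univ_pi_eq_empty_iff.mpr ⟨i, this⟩
  · -- degenerate case : some L j empty
    push_neg at hne
    obtain ⟨j, hj⟩ := hne
    have hLjE : IsEmpty (L j) := hj
    have hLE : IsEmpty (∀ i, L i) := ⟨fun f => hLjE.elim (f j)⟩
    have hKjE : IsEmpty (K j) := by
      have h1 := (hcond j ∅ ∅ finite_empty finite_empty (empty_subset _) (empty_subset _)
        disjoint_bot_left).1 (Set.eq_empty_of_isEmpty _)
      simp only [biInter_empty, biUnion_empty, diff_empty] at h1
      exact ⟨fun x => (h1 ▸ (mem_univ x) : x ∈ (∅ : Set (K j)))⟩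
    have hKE : IsEmpty (∀ i, K i) := ⟨fun f => hKjE.elim (f j)⟩
    refine ⟨∅, fun _ => (∅, ∅), by simp, ?_, ?_, by simp, ?_⟩
    · intro x y _
      exact hLE.elim x
    · exact Set.injOn_empty _
    · intro F H _ _ hF hH _
      rw [Set.subset_empty_iff] at hF hH
      subst hF; subst hH
      constructor
      · intro _; exact Set.eq_empty_of_isEmpty _
      · intro _; exact Set.eq_empty_of_isEmpty _
end

section
/- For every set Γ, the Cantor cube 2^Γ = {0,1}^Γ is a Boolean image of the Tikhonov cube [0,1]^Γ. -/
open Set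

noncomputable section CantorAux

variable {Γ : Type*}

/-- The basic clopen subsets of the Cantor cube. -/
def cubeA (γ : Γ) : Set (Γ → Bool) := {x | x γ = true}

lemma cubeA_inj : Function.Injective (cubeA (Γ := Γ)) := by
  classical
  intro γ δ h
  by_contra hne
  have hx : (Function.update (fun _ => false) γ true : Γ → Bool) ∈ cubeA γ := by
    simp [cubeA, Function.update_self]
  rw [h] at hx
  simp [cubeA, Function.update_of_ne (Ne.symm hne)] at hx

open Classical in
/-- The pseudoclopen assignment. -/
def cubePhi (a : Set (Γ → Bool)) : Set (Γ → unitInterval) × Set (Γ → unitInterval) :=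
  if h : ∃ γ, a = cubeA γ then
    ({f | f h.choose = 1}, {f | (1/2 : ℝ) < f h.choose})
  else (∅, univ)

open Classical in
lemma cubePhi_eq (γ : Γ) :
    ∃ δ, cubeA (Γ := Γ) δ = cubeA γ ∧
      cubePhi (cubeA γ) = ({f | f δ = 1}, {f | (1/2 : ℝ) < f δ}) := by
  have h : ∃ δ, cubeA (Γ := Γ) γ = cubeA δ := ⟨γ, rfl⟩
  refine ⟨h.choose, (h.choose_spec).symm, ?_⟩
  simp only [cubePhi, dif_pos h]

end CantorAux

/-- The Cantor cube `2^Γ` is a Boolean image of the Tikhonov cube `[0,1]^Γ`. -/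

theorem cantor_cube_boolean_image_of_tikhonov_cube (Γ : Type*) :
    IsBooleanImage (Γ → Bool) (Γ → unitInterval) := by
  classical
  refine ⟨range cubeA, cubePhi, ?_, ?_, ?_, ?_, ?_⟩
  · rintro a ⟨γ, rfl⟩
    have : cubeA γ = (fun x : Γ → Bool => x γ) ⁻¹' {true} := rfl
    rw [this]
    exact (isClopen_discrete _).preimage (continuous_apply γ)
  · -- separates points
    intro x y hxy
    have : ∃ γ, x γ ≠ y γ := by
      by_contra h
      push_neg at h
      exact hxy (funext h)
    obtain ⟨γ, hγ⟩ := this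
    refine ⟨cubeA γ, ⟨γ, rfl⟩, ?_⟩
    rcases Bool.eq_false_or_eq_true (x γ) with hx | hx <;>
      rcases Bool.eq_false_or_eq_true (y γ) with hy | hy <;>
      simp_all [cubeA]
  · -- injective
    rintro a ⟨γ, rfl⟩ b ⟨δ, rfl⟩ hab
    obtain ⟨γ', hγ', hγ2⟩ := cubePhi_eq γ
    obtain ⟨δ', hδ', hδ2⟩ := cubePhi_eq δ
    rw [hγ2, hδ2] at hab
    have h1 : ({f : Γ → unitInterval | f γ' = 1} : Set _) = {f | f δ' = 1} :=
      congrArg Prod.fst hab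
    have hf : (Function.update (fun _ => (0:unitInterval)) γ' 1) ∈
        {f : Γ → unitInterval | f γ' = 1} := by simp
    rw [h1] at hf
    simp only [mem_setOf_eq] at hf
    have : γ' = δ' := by
      by_contra hne
      rw [Function.update_of_ne (Ne.symm hne)] at hf
      exact zero_ne_one hf
    rw [← hγ', ← hδ', this]
  · -- pseudoclopen
    rintro a ⟨γ, rfl⟩
    obtain ⟨γ', -, h2⟩ := cubePhi_eq γ
    rw [h2]
    refine ⟨?_, ?_, ?_⟩
    · exact isClosed_eq (continuous_apply γ') continuous_const
    · show IsOpen ((fun f : Γ → unitInterval => (f γ' : ℝ)) ⁻¹' Ioi (1/2))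
      exact isOpen_Ioi.preimage (continuous_subtype_val.comp (continuous_apply γ'))
    · intro f hf
      simp only [mem_setOf_eq] at hf ⊢
      rw [hf]
      norm_num
  · -- the implications
    intro F H hF hH hFG hHG hdisj
    constructor
    · intro h
      exfalso
      set x : Γ → Bool := fun γ => decide (cubeA γ ∈ F) with hx
      have hxmem : x ∈ ⋂₀ F \ ⋃₀ H := by
        constructor
        · intro a haF
          obtain ⟨γ, rfl⟩ := hFG haF
          simp only [cubeA, hx, mem_setOf_eq, decide_eq_true_eq]
          exact decide_eq_true haF
        · rintro ⟨b, hbH, hxb⟩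
          obtain ⟨γ, rfl⟩ := hHG hbH
          simp only [cubeA, hx, mem_setOf_eq, decide_eq_true_eq] at hxb
          exact (hdisj.ne_of_mem (of_decide_eq_true hxb) hbH) rfl
      rw [h] at hxmem
      exact hxmem
    · intro h
      exfalso
      set f : Γ → unitInterval := fun γ => if cubeA γ ∈ F then 1 else 0 with hf
      have hfmem : f ∈ (⋂ a ∈ F, (cubePhi a).1) \ (⋃ a ∈ H, (cubePhi a).2) := by
        constructor
        · simp only [mem_iInter]
          intro a haF
          obtain ⟨γ, rfl⟩ := hFG haF
          obtain ⟨γ', hγ', h2⟩ := cubePhi_eq γ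
          rw [h2]
          have : cubeA γ' ∈ F := hγ' ▸ haF
          simp [hf, this]
        · simp only [mem_iUnion, not_exists]
          intro b hbH
          obtain ⟨γ, rfl⟩ := hHG hbH
          obtain ⟨γ', hγ', h2⟩ := cubePhi_eq γ
          rw [h2]
          have hnF : cubeA γ' ∉ F := fun hc => (hdisj.ne_of_mem hc hbH) hγ'
          simp only [mem_setOf_eq, hf, if_neg hnF]
          norm_num
      rw [h] at hfmem
      exact hfmem
end

section
/- Let K be a separably connected compact Hausdorff space, let L be a compact zero-dimensional Hausdorff space, and let 𝒢 be a family of clopen subsets of L which is isomorphic to a family of pseudoclopens of K. Then for every x, y ∈ L there is a countable decomposition 𝒢 = ⋃_{n<ω} 𝒢ₙ such that for every n and every partition 𝒢ₙ = ℱ ∪ ℋ into disjoint pieces with ℱ ⊇ {a ∈ 𝒢ₙ : x,y ∈ a} and ℋ ⊇ {a ∈ 𝒢ₙ : x,y ∉ a}, one has ⋂ℱ \ ⋃ℋ ≠ ∅. In particular, for every n the family 𝒢ₙ(x,y) of those a ∈ 𝒢ₙ that contain exactly one of x, y is independent. -/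
open Set

/-- A family of sets is independent: every finite Boolean configuration is nonempty. -/
def IndepFamily {X : Type*} (𝒢 : Set (Set X)) : Prop :=
  ∀ F H : Set (Set X), F.Finite → H.Finite → F ⊆ 𝒢 → H ⊆ 𝒢 → Disjoint F H →
    (⋂₀ F \ ⋃₀ H).Nonempty

/-- A point of `K` realizing the filter/ideal of a point `z : L` through the
pseudoclopen isomorphism. -/
private lemma exists_base_point {K L : Type*} [TopologicalSpace K] [CompactSpace K]
    (𝒢 : Set (Set L)) (φ : Set L → Set K × Set K) (hφ : IsPseudoclopenIso 𝒢 φ)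
    (z : L) :
    ∃ u : K, ∀ a ∈ 𝒢, (z ∈ a → u ∈ (φ a).1) ∧ (z ∉ a → u ∉ (φ a).2) := by
  classical
  set t : ↥𝒢 → Set K := fun a => if z ∈ (a : Set L) then (φ a).1 else ((φ a).2)ᶜ with ht
  have htc : ∀ a, IsClosed (t a) := by
    intro a
    by_cases h : z ∈ (a : Set L)
    · simpa [t, h] using (hφ.2.1 a a.2).1
    · simpa [t, h] using (hφ.2.1 a a.2).2.1.isClosed_compl
  have hfip : ∀ w : Finset ↥𝒢, ((univ : Set K) ∩ ⋂ i ∈ w, t i).Nonempty := by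
    intro w
    set F₀ : Set (Set L) := Subtype.val '' {i : ↥𝒢 | i ∈ w ∧ z ∈ (i : Set L)} with hF₀
    set H₀ : Set (Set L) := Subtype.val '' {i : ↥𝒢 | i ∈ w ∧ z ∉ (i : Set L)} with hH₀
    have hsetF : ({i : ↥𝒢 | i ∈ w ∧ z ∈ (i : Set L)}).Finite :=
      w.finite_toSet.subset (fun i hi => hi.1)
    have hsetH : ({i : ↥𝒢 | i ∈ w ∧ z ∉ (i : Set L)}).Finite :=
      w.finite_toSet.subset (fun i hi => hi.1)
    have hF₀fin : F₀.Finite := hsetF.image _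
    have hH₀fin : H₀.Finite := hsetH.image _
    have hF₀sub : F₀ ⊆ 𝒢 := by rintro a ⟨i, _, rfl⟩; exact i.2
    have hH₀sub : H₀ ⊆ 𝒢 := by rintro a ⟨i, _, rfl⟩; exact i.2
    have hdisj : Disjoint F₀ H₀ := by
      rw [disjoint_left]
      rintro a ⟨i, ⟨hi, hzi⟩, rfl⟩ ⟨j, ⟨hj, hzj⟩, hji⟩
      rw [hji] at hzj; exact hzj hzi
    have hzmem : z ∈ ⋂₀ F₀ \ ⋃₀ H₀ := by
      constructor
      · rintro a ⟨i, ⟨hi, hzi⟩, rfl⟩; exact hzi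
      · rintro ⟨b, ⟨j, ⟨hj, hzj⟩, rfl⟩, hzb⟩; exact hzj hzb
    have hne : ((⋂ a ∈ F₀, (φ a).1) \ ⋃ a ∈ H₀, (φ a).2).Nonempty := by
      rcases eq_empty_or_nonempty ((⋂ a ∈ F₀, (φ a).1) \ ⋃ a ∈ H₀, (φ a).2) with h | h
      · have h2 := (hφ.2.2 F₀ H₀ hF₀fin hH₀fin hF₀sub hH₀sub hdisj).2 h
        rw [h2] at hzmem; exact absurd hzmem (notMem_empty z)
      · exact h
    obtain ⟨p, hp⟩ := hne
    refine ⟨p, mem_univ _, ?_⟩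
    rw [mem_iInter₂]
    intro i hi
    by_cases hzi : z ∈ (i : Set L)
    · have hmem : (i : Set L) ∈ F₀ := ⟨i, ⟨hi, hzi⟩, rfl⟩
      have hp1 := hp.1
      rw [mem_iInter₂] at hp1
      simpa [t, hzi] using hp1 _ hmem
    · have hmem : (i : Set L) ∈ H₀ := ⟨i, ⟨hi, hzi⟩, rfl⟩
      simp only [t, if_neg hzi, mem_compl_iff]
      intro hcon
      exact hp.2 (mem_iUnion₂.2 ⟨_, hmem, hcon⟩)
  obtain ⟨p, hp⟩ := (isCompact_univ (X := K)).inter_iInter_nonempty t htc hfip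
  refine ⟨p, fun a ha => ⟨fun hz => ?_, fun hz hcon => ?_⟩⟩
  · have := mem_iInter.1 hp.2 ⟨a, ha⟩
    simpa [t, hz] using this
  · have := mem_iInter.1 hp.2 ⟨a, ha⟩
    rw [ht] at this
    simp only [if_neg hz, mem_compl_iff] at this
    exact this hcon

/-- Compactness upgrade in `L`: finite nonemptiness of the configurations implies
full nonemptiness, for closed `F`-members and open `H`-members. -/
private lemma sInter_diff_sUnion_nonempty {L : Type*} [TopologicalSpace L] [CompactSpace L]
    (F H : Set (Set L)) (hF : ∀ a ∈ F, IsClosed a) (hH : ∀ b ∈ H, IsOpen b)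
    (hfin : ∀ F' H' : Set (Set L), F'.Finite → H'.Finite → F' ⊆ F → H' ⊆ H →
      (⋂₀ F' \ ⋃₀ H').Nonempty) :
    (⋂₀ F \ ⋃₀ H).Nonempty := by
  classical
  set t : ↥F ⊕ ↥H → Set L := Sum.elim (fun a => (a : Set L)) (fun b => ((b : Set L))ᶜ) with ht
  have htc : ∀ i, IsClosed (t i) := by
    rintro (a | b)
    · exact hF a a.2
    · exact (hH b b.2).isClosed_compl
  have hst : ∀ w : Finset (↥F ⊕ ↥H), ((univ : Set L) ∩ ⋂ i ∈ w, t i).Nonempty := by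
    intro w
    set F' : Set (Set L) := Subtype.val '' {a : ↥F | Sum.inl a ∈ w} with hF'
    set H' : Set (Set L) := Subtype.val '' {b : ↥H | Sum.inr b ∈ w} with hH'
    have hF'fin : F'.Finite :=
      ((w.finite_toSet.preimage (Sum.inl_injective.injOn)).image _)
    have hH'fin : H'.Finite :=
      ((w.finite_toSet.preimage (Sum.inr_injective.injOn)).image _)
    obtain ⟨p, hp⟩ := hfin F' H' hF'fin hH'fin
      (by rintro a ⟨i, _, rfl⟩; exact i.2) (by rintro b ⟨j, _, rfl⟩; exact j.2)
    refine ⟨p, mem_univ _, ?_⟩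
    rw [mem_iInter₂]
    rintro (a | b) hi
    · exact hp.1 _ ⟨a, hi, rfl⟩
    · simp only [t, Sum.elim_inr, mem_compl_iff]
      exact fun hc => hp.2 ⟨b, ⟨b, hi, rfl⟩, hc⟩
  obtain ⟨p, hp⟩ := isCompact_univ.inter_iInter_nonempty t htc hst
  refine ⟨p, fun a ha => mem_iInter.1 hp.2 (Sum.inl ⟨a, ha⟩), ?_⟩
  rintro ⟨b, hb, hpb⟩
  exact (mem_iInter.1 hp.2 (Sum.inr ⟨b, hb⟩)) hpb

/-- If a point of `K` lies in all the `φ⁺` of `F'` and avoids all the `φ⁻` of `H'`,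
then the corresponding configuration in `L` is nonempty. -/
private lemma nonempty_of_point {K L : Type*} [TopologicalSpace K]
    (𝒢 : Set (Set L)) (φ : Set L → Set K × Set K) (hφ : IsPseudoclopenIso 𝒢 φ)
    (F' H' : Set (Set L)) (hf : F'.Finite) (hh : H'.Finite)
    (hF : F' ⊆ 𝒢) (hH : H' ⊆ 𝒢) (hd : Disjoint F' H') (p : K)
    (hp1 : ∀ a ∈ F', p ∈ (φ a).2) (hp2 : ∀ b ∈ H', p ∉ (φ b).1) :
    (⋂₀ F' \ ⋃₀ H').Nonempty := by
  rw [nonempty_iff_ne_empty]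
  intro h
  have hK := (hφ.2.2 F' H' hf hh hF hH hd).1 h
  have hpK : p ∈ (⋂ a ∈ F', (φ a).2) \ ⋃ a ∈ H', (φ a).1 := by
    refine ⟨mem_iInter₂.2 hp1, fun hc => ?_⟩
    rcases mem_iUnion₂.1 hc with ⟨b, hb, hpb⟩
    exact hp2 b hb hpb
  rw [hK] at hpK
  exact hpK

/-- decomposition theorem for families of clopens isomorphic to
pseudoclopens of a separably connected compact space. -/
theorem countable_decomposition_of_sep_connected {K L : Type*}
    [TopologicalSpace K] [CompactSpace K] [T2Space K]
    [TopologicalSpace L] [CompactSpace L] [T2Space L] [TotallyDisconnectedSpace L]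
    (hK : SeparablyConnected K)
    (𝒢 : Set (Set L)) (h𝒢 : ∀ a ∈ 𝒢, IsClopen a)
    (φ : Set L → Set K × Set K) (hφ : IsPseudoclopenIso 𝒢 φ) :
    ∀ x y : L, ∃ G : ℕ → Set (Set L), (⋃ n, G n) = 𝒢 ∧
      ∀ n : ℕ,
        (∀ F H : Set (Set L), F ∪ H = G n → Disjoint F H →
          {a ∈ G n | x ∈ a ∧ y ∈ a} ⊆ F → {a ∈ G n | x ∉ a ∧ y ∉ a} ⊆ H →
          (⋂₀ F \ ⋃₀ H).Nonempty) ∧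
        IndepFamily {a ∈ G n | (x ∈ a ∧ y ∉ a) ∨ (y ∈ a ∧ x ∉ a)} := by
  intro x y
  obtain ⟨u, hu⟩ := exists_base_point 𝒢 φ hφ x
  obtain ⟨v, hv⟩ := exists_base_point 𝒢 φ hφ y
  obtain ⟨S, huS, hvS, hSconn, hSsep⟩ := hK u v
  obtain ⟨c, hccount, hSc⟩ := hSsep
  have hcne : c.Nonempty := by
    rcases c.eq_empty_or_nonempty with rfl | h
    · rw [closure_empty] at hSc; exact absurd (hSc huS) (notMem_empty u)
    · exact h
  obtain ⟨d, hdc⟩ := hccount.exists_eq_range hcne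
  set G : ℕ → Set (Set L) := fun n =>
    match n with
    | 0 => {a ∈ 𝒢 | (x ∈ a ∧ y ∈ a) ∨ (x ∉ a ∧ y ∉ a)}
    | (m + 1) => {a ∈ 𝒢 | d m ∈ (φ a).2 \ (φ a).1} with hG
  have hGsub : ∀ n, G n ⊆ 𝒢 := by
    intro n
    cases n with
    | zero => exact fun a ha => ha.1
    | succ m => exact fun a ha => ha.1
  -- Part 1 : the partition property for each class
  have part1 : ∀ n, ∀ F H : Set (Set L), F ∪ H = G n → Disjoint F H →
      {a ∈ G n | x ∈ a ∧ y ∈ a} ⊆ F → {a ∈ G n | x ∉ a ∧ y ∉ a} ⊆ H →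
      (⋂₀ F \ ⋃₀ H).Nonempty := by
    intro n F H hFH hdisj hbF hnH
    have hFG : F ⊆ G n := hFH ▸ subset_union_left
    have hHG : H ⊆ G n := hFH ▸ subset_union_right
    obtain ⟨p, hp1, hp2⟩ : ∃ p : K, (∀ a ∈ F, p ∈ (φ a).2) ∧ (∀ b ∈ H, p ∉ (φ b).1) := by
      cases n with
      | zero =>
        refine ⟨u, fun a ha => ?_, fun b hb => ?_⟩
        · rcases (hFG ha).2 with h | h
          · exact (hφ.2.1 a (hFG ha).1).2.2 ((hu a (hFG ha).1).1 h.1)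
          · exact absurd (hnH ⟨hFG ha, h⟩) (disjoint_left.1 hdisj ha)
        · rcases (hHG hb).2 with h | h
          · exact absurd (hbF ⟨hHG hb, h⟩) (disjoint_right.1 hdisj hb)
          · exact fun hc => (hu b (hHG hb).1).2 h.1 ((hφ.2.1 b (hHG hb).1).2.2 hc)
      | succ m =>
        exact ⟨d m, fun a ha => ((hFG ha).2).1, fun b hb => ((hHG hb).2).2⟩
    apply sInter_diff_sUnion_nonempty F H
      (fun a ha => (h𝒢 a (hGsub n (hFG ha))).isClosed)
      (fun b hb => (h𝒢 b (hGsub n (hHG hb))).isOpen)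
    intro F' H' hf hh hF' hH'
    exact nonempty_of_point 𝒢 φ hφ F' H' hf hh
      (fun a ha => hGsub n (hFG (hF' ha))) (fun b hb => hGsub n (hHG (hH' hb)))
      (hdisj.mono hF' hH') p (fun a ha => hp1 a (hF' ha)) (fun b hb => hp2 b (hH' hb))
  refine ⟨G, ?_, ?_⟩
  · -- coverage
    apply subset_antisymm
    · exact iUnion_subset hGsub
    · intro a ha
      have gapcase : ∀ (w : K), w ∈ S → w ∈ (φ a).2 → w ∉ (φ a).1 → a ∈ ⋃ n, G n := by
        intro w hwS hw2 hw1
        have hwc : w ∈ closure c := hSc hwS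
        have hopen : IsOpen ((φ a).2 ∩ ((φ a).1)ᶜ) :=
          (hφ.2.1 a ha).2.1.inter (hφ.2.1 a ha).1.isOpen_compl
        have := (mem_closure_iff.1 hwc) _ hopen ⟨hw2, hw1⟩
        obtain ⟨q, ⟨hq2, hq1⟩, hqc⟩ := this
        rw [hdc] at hqc
        obtain ⟨m, rfl⟩ := hqc
        exact mem_iUnion.2 ⟨m + 1, ha, hq2, hq1⟩
      by_cases hx : x ∈ a <;> by_cases hy : y ∈ a
      · exact mem_iUnion.2 ⟨0, ha, Or.inl ⟨hx, hy⟩⟩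
      · -- x ∈ a, y ∉ a
        have hcover : S ⊆ (φ a).2 ∪ ((φ a).1)ᶜ := by
          intro s _
          by_cases h : s ∈ (φ a).1
          · exact Or.inl ((hφ.2.1 a ha).2.2 h)
          · exact Or.inr h
        obtain ⟨w, hwS, hw2, hw1⟩ := hSconn.isPreconnected _ _
          (hφ.2.1 a ha).2.1 (hφ.2.1 a ha).1.isOpen_compl hcover
          ⟨u, huS, (hφ.2.1 a ha).2.2 ((hu a ha).1 hx)⟩
          ⟨v, hvS, fun hc => (hv a ha).2 hy ((hφ.2.1 a ha).2.2 hc)⟩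
        exact gapcase w hwS hw2 hw1
      · -- y ∈ a, x ∉ a
        have hcover : S ⊆ (φ a).2 ∪ ((φ a).1)ᶜ := by
          intro s _
          by_cases h : s ∈ (φ a).1
          · exact Or.inl ((hφ.2.1 a ha).2.2 h)
          · exact Or.inr h
        obtain ⟨w, hwS, hw2, hw1⟩ := hSconn.isPreconnected _ _
          (hφ.2.1 a ha).2.1 (hφ.2.1 a ha).1.isOpen_compl hcover
          ⟨v, hvS, (hφ.2.1 a ha).2.2 ((hv a ha).1 hy)⟩
          ⟨u, huS, fun hc => (hu a ha).2 hx ((hφ.2.1 a ha).2.2 hc)⟩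
        exact gapcase w hwS hw2 hw1
      · exact mem_iUnion.2 ⟨0, ha, Or.inr ⟨hx, hy⟩⟩
  · -- per class properties
    intro n
    refine ⟨part1 n, ?_⟩
    intro F H _ _ hFsub hHsub hdisj
    set B : Set (Set L) := {a ∈ G n | x ∈ a ∧ y ∈ a} with hB
    have hFB : F ∪ B ⊆ G n := by
      apply union_subset
      · exact fun a ha => (hFsub ha).1
      · exact fun a ha => ha.1
    have h1 := part1 n (F ∪ B) (G n \ (F ∪ B)) (union_diff_cancel hFB)
      disjoint_sdiff_right (fun a ha => Or.inr ha) ?_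
    · obtain ⟨p, hp⟩ := h1
      have hHsub' : H ⊆ G n \ (F ∪ B) := by
        intro b hb
        refine ⟨(hHsub hb).1, ?_⟩
        rintro (hbF | hbB)
        · exact (disjoint_right.1 hdisj hb) hbF
        · rcases (hHsub hb).2 with h | h
          · exact h.2 hbB.2.2
          · exact h.2 hbB.2.1
      refine ⟨p, fun a haF => hp.1 _ (Or.inl haF), fun hc => ?_⟩
      rcases hc with ⟨b, hb, hpb⟩
      exact hp.2 ⟨b, hHsub' hb, hpb⟩
    · -- neither-sets are in the complement
      intro a ha
      refine ⟨ha.1, ?_⟩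
      rintro (haF | haB)
      · rcases (hFsub haF).2 with h | h
        · exact ha.2.1 h.1
        · exact ha.2.2 h.1
      · exact ha.2.1 haB.2.1
end

section
/- Let K be a separably connected compact Hausdorff space that does not map continuously onto the Tikhonov cube [0,1]^{ω₁} (ω₁ the first uncountable ordinal). Then every compact zero-dimensional Hausdorff space L that is a Boolean image of K is Corson compact. -/
open Set

section AuxLemmas

open Cardinal Filter Topology

private lemma auxCont_of_isEmpty {α β : Type*} [TopologicalSpace α] [TopologicalSpace β]
    [IsEmpty α] (f : α → β) : Continuous f :=
  continuous_def.mpr fun s _ => by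
    rw [Set.eq_empty_of_isEmpty (f ⁻¹' s)]; exact isOpen_empty

private lemma auxHasSum_half_pow : HasSum (fun n : ℕ => ((2:ℝ)⁻¹) ^ (n + 1)) 1 := by
  have h := (hasSum_geometric_of_lt_one (by norm_num : (0:ℝ) ≤ 2⁻¹) (by norm_num)).mul_right 2⁻¹
  have e : ((1 : ℝ) - 2⁻¹)⁻¹ * 2⁻¹ = 1 := by norm_num
  rw [e] at h
  have e2 : (fun n : ℕ => ((2:ℝ)⁻¹) ^ (n + 1)) = fun n : ℕ => ((2:ℝ)⁻¹) ^ n * 2⁻¹ :=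
    funext fun n => pow_succ _ _
  rw [e2]
  exact h

private lemma auxBinary (r : ℝ) (h0 : 0 ≤ r) (h1 : r ≤ 1) :
    ∃ ε : ℕ → Bool, HasSum (fun n => if ε n then ((2:ℝ)⁻¹) ^ (n + 1) else 0) r := by
  rcases eq_or_lt_of_le h1 with h | h
  · refine ⟨fun _ => true, ?_⟩
    simpa [h] using auxHasSum_half_pow
  · set m : ℕ → ℤ := fun n => ⌊r * 2 ^ n⌋ with hm
    have hstep : ∀ n, m (n + 1) = 2 * m n ∨ m (n + 1) = 2 * m n + 1 := by
      intro n
      have h2 : r * 2 ^ (n + 1) = 2 * (r * 2 ^ n) := by ring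
      have l1 : 2 * m n ≤ m (n + 1) := by
        rw [hm]; rw [Int.le_floor]
        push_cast
        rw [h2]
        have := Int.floor_le (r * 2 ^ n)
        linarith
      have l2 : m (n + 1) < 2 * m n + 2 := by
        rw [hm]
        rw [Int.floor_lt]
        push_cast
        rw [h2]
        have := Int.lt_floor_add_one (r * 2 ^ n)
        linarith
      omega
    set ε : ℕ → Bool := fun n => decide (m (n + 1) = 2 * m n + 1) with hε
    set f : ℕ → ℝ := fun n => if ε n then ((2:ℝ)⁻¹) ^ (n + 1) else 0 with hf
    have hfval : ∀ n, f n = ((m (n + 1) : ℝ) - 2 * (m n : ℝ)) * ((2:ℝ)⁻¹) ^ (n + 1) := by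
      intro n
      rcases hstep n with hc | hc
      · have hb : ε n = false := decide_eq_false (by omega)
        rw [hf]
        dsimp only
        rw [hb]
        simp only [Bool.false_eq_true, if_false]
        rw [hc]
        push_cast
        ring
      · have hb : ε n = true := decide_eq_true hc
        rw [hf]
        dsimp only
        rw [hb]
        simp only [if_true]
        rw [hc]
        push_cast
        ring
    have hm0 : m 0 = 0 := by
      rw [hm]
      simp only [pow_zero, mul_one]
      exact Int.floor_eq_zero_iff.mpr ⟨h0, h⟩
    have hpartial : ∀ N, ∑ n ∈ Finset.range N, f n = (m N : ℝ) / 2 ^ N := by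
      intro N
      induction N with
      | zero => simp [hm0]
      | succ N ih =>
          rw [Finset.sum_range_succ, ih, hfval N]
          have h2N : (2:ℝ) ^ N ≠ 0 := by positivity
          have h2N1 : (2:ℝ) ^ (N+1) ≠ 0 := by positivity
          rw [inv_pow]
          field_simp
          ring
    have hub : ∀ N, (m N : ℝ) / 2 ^ N ≤ r := by
      intro N
      rw [div_le_iff₀ (by positivity : (0:ℝ) < 2 ^ N)]
      exact Int.floor_le (r * 2 ^ N)
    have hlb : ∀ N, r - ((2:ℝ)⁻¹) ^ N ≤ (m N : ℝ) / 2 ^ N := by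
      intro N
      have h2N : (0:ℝ) < 2 ^ N := by positivity
      have hi : ((2:ℝ)⁻¹) ^ N * 2 ^ N = 1 := by
        rw [inv_pow, inv_mul_cancel₀ (by positivity)]
      have expand : (r - ((2:ℝ)⁻¹) ^ N) * 2 ^ N = r * 2 ^ N - 1 := by
        rw [sub_mul, hi]
      rw [le_div_iff₀ h2N, expand]
      linarith [Int.lt_floor_add_one (r * 2 ^ N)]
    have htend : Tendsto (fun N => (m N : ℝ) / 2 ^ N) atTop (𝓝 r) := by
      have hl : Tendsto (fun N : ℕ => r - ((2:ℝ)⁻¹) ^ N) atTop (𝓝 r) := by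
        have := (tendsto_pow_atTop_nhds_zero_of_lt_one
          (by norm_num : (0:ℝ) ≤ 2⁻¹) (by norm_num : (2:ℝ)⁻¹ < 1)).const_sub r
        simpa using this
      exact tendsto_of_tendsto_of_tendsto_of_le_of_le hl tendsto_const_nhds hlb hub
    have hnn : ∀ n, 0 ≤ f n := by
      intro n; rw [hf]; dsimp only; split <;> positivity
    refine ⟨ε, (hasSum_iff_tendsto_nat_of_nonneg hnn r).mpr ?_⟩
    rw [show (fun n => ∑ i ∈ Finset.range n, f i) = fun N => (m N : ℝ) / 2 ^ N from
      funext hpartial]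
    exact htend

private lemma auxEmbed {κ : Type u} (hκ : #κ ≤ Cardinal.aleph 1) {α : Type v} {s : Set α}
    (hs : ¬ s.Countable) : Nonempty ((κ × ℕ) ↪ ↥s) := by
  rw [← Cardinal.lift_mk_le']
  have h1 : #(κ × ℕ) ≤ Cardinal.aleph 1 := by
    rw [Cardinal.mk_prod, Cardinal.mk_nat, Cardinal.lift_aleph0, Cardinal.lift_uzero]
    calc #κ * ℵ₀ ≤ Cardinal.aleph 1 * ℵ₀ := mul_le_mul_left hκ _
      _ = Cardinal.aleph 1 := by
          rw [Cardinal.mul_eq_max (Cardinal.aleph0_le_aleph 1) le_rfl]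
          exact max_eq_left (Cardinal.aleph0_le_aleph 1)
  have h2 : Cardinal.aleph 1 ≤ #↥s := by
    rw [Cardinal.countable_iff_lt_aleph_one] at hs
    exact le_of_not_gt hs
  calc Cardinal.lift.{v} #(κ × ℕ) ≤ Cardinal.lift.{v} (Cardinal.aleph 1) := by
        exact Cardinal.lift_le.mpr h1
    _ = Cardinal.aleph 1 := by rw [Cardinal.lift_aleph, Ordinal.lift_one]
    _ = Cardinal.lift.{u} (Cardinal.aleph 1) := by rw [Cardinal.lift_aleph, Ordinal.lift_one]
    _ ≤ Cardinal.lift.{u} #↥s := Cardinal.lift_le.mpr h2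

private lemma auxCubeSurj {K : Type*} [TopologicalSpace K] [CompactSpace K] [T2Space K]
    {κ : Type*} (A B : κ × ℕ → Set K) (hA : ∀ p, IsClosed (A p)) (hB : ∀ p, IsClosed (B p))
    (hd : ∀ p, Disjoint (B p) (A p))
    (hFIP : ∀ (u : Finset (κ × ℕ)) (ε : κ × ℕ → Bool),
      (⋂ p ∈ u, (if ε p then A p else B p)).Nonempty) :
    ∃ f : K → κ → unitInterval, Continuous f ∧ Function.Surjective f := by
  classical
  have hUry : ∀ p : κ × ℕ, ∃ g : C(K, ℝ), EqOn g 0 (B p) ∧ EqOn g 1 (A p) ∧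
      ∀ x, g x ∈ Icc (0:ℝ) 1 :=
    fun p => exists_continuous_zero_one_of_isClosed (hB p) (hA p) (hd p)
  choose g hg0 hg1 hg01 using hUry
  set F : K → κ → ℝ := fun z γ => ∑' n : ℕ, g (γ, n) z * ((2:ℝ)⁻¹) ^ (n + 1) with hF
  have hterm_nonneg : ∀ γ (n : ℕ) (z : K), 0 ≤ g (γ, n) z * ((2:ℝ)⁻¹) ^ (n + 1) :=
    fun γ n z => mul_nonneg (hg01 (γ, n) z).1 (by positivity)
  have hterm_le : ∀ γ (n : ℕ) (z : K), g (γ, n) z * ((2:ℝ)⁻¹) ^ (n + 1) ≤ ((2:ℝ)⁻¹) ^ (n + 1) :=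
    fun γ n z => mul_le_of_le_one_left (by positivity) (hg01 (γ, n) z).2
  have hsummable : ∀ γ (z : K), Summable (fun n : ℕ => g (γ, n) z * ((2:ℝ)⁻¹) ^ (n + 1)) :=
    fun γ z => Summable.of_nonneg_of_le (hterm_nonneg γ · z) (hterm_le γ · z)
      auxHasSum_half_pow.summable
  have hF0 : ∀ z γ, 0 ≤ F z γ := fun z γ => tsum_nonneg (hterm_nonneg γ · z)
  have hF1 : ∀ z γ, F z γ ≤ 1 := by
    intro z γ
    calc F z γ ≤ ∑' n : ℕ, ((2:ℝ)⁻¹) ^ (n + 1) :=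
          Summable.tsum_le_tsum (hterm_le γ · z) (hsummable γ z) auxHasSum_half_pow.summable
      _ = 1 := auxHasSum_half_pow.tsum_eq
  have hFcont : ∀ γ, Continuous (fun z => F z γ) := by
    intro γ
    apply continuous_tsum (u := fun n : ℕ => ((2:ℝ)⁻¹) ^ (n + 1))
    · exact fun n => (g (γ, n)).continuous.mul continuous_const
    · exact auxHasSum_half_pow.summable
    · intro n z
      rw [Real.norm_eq_abs, abs_of_nonneg (hterm_nonneg γ n z)]
      exact hterm_le γ n z
  refine ⟨fun z γ => ⟨F z γ, hF0 z γ, hF1 z γ⟩, ?_, ?_⟩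
  · exact continuous_pi fun γ => (hFcont γ).subtype_mk _
  · intro t
    have hbin : ∀ γ, ∃ ε : ℕ → Bool,
        HasSum (fun n => if ε n then ((2:ℝ)⁻¹) ^ (n + 1) else 0) (t γ : ℝ) :=
      fun γ => auxBinary (t γ) (t γ).2.1 (t γ).2.2
    choose ε hεsum using hbin
    set Z : κ × ℕ → Set K := fun p => if ε p.1 p.2 then A p else B p with hZ
    have hZclosed : ∀ p, IsClosed (Z p) := by
      intro p; rw [hZ]; dsimp only; split
      · exact hA p
      · exact hB p
    have hZne : (⋂ p, Z p).Nonempty := by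
      by_contra hne
      rw [not_nonempty_iff_eq_empty] at hne
      obtain ⟨u, hu⟩ := isCompact_univ.elim_finite_subfamily_closed Z hZclosed
        (by rw [univ_inter]; exact hne)
      rw [univ_inter] at hu
      have h2 : (⋂ p ∈ u, Z p).Nonempty := by
        have := hFIP u (fun p => ε p.1 p.2)
        simpa [hZ] using this
      rw [hu] at h2
      exact h2.ne_empty rfl
    obtain ⟨x, hx⟩ := hZne
    have hgx : ∀ γ (n : ℕ), g (γ, n) x = if ε γ n then 1 else 0 := by
      intro γ n
      have hxp : x ∈ Z (γ, n) := mem_iInter.mp hx (γ, n)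
      rw [hZ] at hxp
      dsimp only at hxp
      split at hxp
      · next hc => simp only [hc, if_true]; exact hg1 (γ, n) hxp
      · next hc => simp only [hc, if_false]; exact hg0 (γ, n) hxp
    refine ⟨x, ?_⟩
    funext γ
    apply Subtype.ext
    show F x γ = (t γ : ℝ)
    rw [hF]
    dsimp only
    rw [← (hεsum γ).tsum_eq]
    apply tsum_congr
    intro n
    rw [hgx γ n]
    split
    · rw [one_mul]
    · rw [zero_mul]

end AuxLemmas

/-- If `K` is separably connected compact Hausdorff and does not
map continuously onto `[0,1]^{ω₁}`, then every Boolean image of `K` is Corson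
compact. -/
theorem corson_of_boolean_image_of_sep_connected {K : Type*}
    [TopologicalSpace K] [CompactSpace K] [T2Space K]
    (hK : SeparablyConnected K)
    (hnot : ¬ ∃ f : K → ((Cardinal.aleph 1).ord.ToType → unitInterval),
      Continuous f ∧ Function.Surjective f)
    (L : Type*) [TopologicalSpace L] [CompactSpace L] [T2Space L]
    [TotallyDisconnectedSpace L]
    (hL : IsBooleanImage L K) : IsCorsonCompact L := by
  classical
  obtain ⟨𝒢, φ, hclopen, hsep, hinj, hpc, hiso⟩ := hL
  by_cases hLe : IsEmpty L
  · refine ⟨L, ∅, isCompact_empty, by simp, ⟨?_⟩⟩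
    haveI : IsEmpty (↥(∅ : Set (L → ℝ))) := Set.isEmpty_coe_sort.mpr rfl
    exact { toEquiv := Equiv.equivOfIsEmpty L _,
            continuous_toFun := auxCont_of_isEmpty _,
            continuous_invFun := auxCont_of_isEmpty _ }
  rw [not_isEmpty_iff] at hLe
  obtain ⟨x₀⟩ := hLe
  -- contrapositive forms of the isomorphism conditions
  have soft : ∀ F H : Set (Set L), F.Finite → H.Finite → F ⊆ 𝒢 → H ⊆ 𝒢 → Disjoint F H →
      ((⋂ a ∈ F, (φ a).2) \ (⋃ a ∈ H, (φ a).1)).Nonempty → (⋂₀ F \ ⋃₀ H).Nonempty := by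
    intro F H hFf hHf hF hH hd hne
    rw [nonempty_iff_ne_empty] at hne ⊢
    exact fun he => hne ((hiso F H hFf hHf hF hH hd).1 he)
  have hard : ∀ F H : Set (Set L), F.Finite → H.Finite → F ⊆ 𝒢 → H ⊆ 𝒢 → Disjoint F H →
      (⋂₀ F \ ⋃₀ H).Nonempty → ((⋂ a ∈ F, (φ a).1) \ (⋃ a ∈ H, (φ a).2)).Nonempty := by
    intro F H hFf hHf hF hH hd hne
    rw [nonempty_iff_ne_empty] at hne ⊢
    exact fun he => hne ((hiso F H hFf hHf hF hH hd).2 he)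
  -- trace points in K realizing the membership pattern of a point of L
  have trace : ∀ x : L, ∃ k : K, ∀ a ∈ 𝒢, (x ∈ a → k ∈ (φ a).1) ∧ (x ∉ a → k ∉ (φ a).2) := by
    intro x
    set C : ↥𝒢 → Set K := fun a => if x ∈ (a : Set L) then (φ a).1 else ((φ a).2)ᶜ with hC
    have hCc : ∀ a : ↥𝒢, IsClosed (C a) := by
      intro a
      rw [hC]; dsimp only
      split
      · exact (hpc a a.2).1
      · exact (hpc a a.2).2.1.isClosed_compl
    have hCne : (⋂ a, C a).Nonempty := by
      by_contra hne
      rw [not_nonempty_iff_eq_empty] at hne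
      obtain ⟨u, hu⟩ := isCompact_univ.elim_finite_subfamily_closed C hCc
        (by rw [univ_inter]; exact hne)
      rw [univ_inter] at hu
      set F : Set (Set L) := (fun a : ↥𝒢 => (a : Set L)) '' {a : ↥𝒢 | a ∈ u ∧ x ∈ (a : Set L)}
        with hFdef
      set H : Set (Set L) := (fun a : ↥𝒢 => (a : Set L)) '' {a : ↥𝒢 | a ∈ u ∧ x ∉ (a : Set L)}
        with hHdef
      have hFf : F.Finite := (u.finite_toSet.subset fun a ha => ha.1).image _
      have hHf : H.Finite := (u.finite_toSet.subset fun a ha => ha.1).image _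
      have hF𝒢 : F ⊆ 𝒢 := by rintro s ⟨a, _, rfl⟩; exact a.2
      have hH𝒢 : H ⊆ 𝒢 := by rintro s ⟨a, _, rfl⟩; exact a.2
      have hdFH : Disjoint F H := by
        rw [Set.disjoint_left]
        rintro s ⟨a, ⟨_, hxa⟩, rfl⟩ ⟨b, ⟨_, hxb⟩, hba⟩
        have hba' : (b : Set L) = (a : Set L) := hba
        rw [hba'] at hxb
        exact hxb hxa
      have hx : x ∈ ⋂₀ F \ ⋃₀ H := by
        constructor
        · rintro s ⟨a, ⟨_, hxa⟩, rfl⟩; exact hxa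
        · rintro ⟨s, ⟨a, ⟨_, hxa⟩, rfl⟩, hxs⟩; exact hxa hxs
      obtain ⟨z, hz1, hz2⟩ := hard F H hFf hHf hF𝒢 hH𝒢 hdFH ⟨x, hx⟩
      have hzmem : z ∈ ⋂ a ∈ u, C a := by
        refine mem_iInter₂.mpr fun a ha => ?_
        rw [hC]; dsimp only
        split
        · next hxa => exact mem_iInter₂.mp hz1 (a : Set L) ⟨a, ⟨ha, hxa⟩, rfl⟩
        · next hxa =>
            intro hz2'
            exact hz2 (mem_iUnion₂.mpr ⟨(a : Set L), ⟨a, ⟨ha, hxa⟩, rfl⟩, hz2'⟩)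
      rw [hu] at hzmem
      exact absurd hzmem (notMem_empty z)
    obtain ⟨k, hk⟩ := hCne
    refine ⟨k, fun a ha => ⟨fun hxa => ?_, fun hxa => ?_⟩⟩
    · have hmem := mem_iInter.mp hk ⟨a, ha⟩
      rw [hC] at hmem; dsimp only at hmem
      rwa [if_pos hxa] at hmem
    · have hmem := mem_iInter.mp hk ⟨a, ha⟩
      rw [hC] at hmem; dsimp only at hmem
      rw [if_neg hxa] at hmem
      exact hmem
  -- the key countability claim
  have key : ∀ x y : L, x ≠ y →
      {a | a ∈ 𝒢 ∧ ((x ∈ a ∧ y ∉ a) ∨ (y ∈ a ∧ x ∉ a))}.Countable := by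
    intro x y hxy
    by_contra hunc
    set Δ : Set (Set L) := {a | a ∈ 𝒢 ∧ ((x ∈ a ∧ y ∉ a) ∨ (y ∈ a ∧ x ∉ a))} with hΔdef
    have hΔ𝒢 : Δ ⊆ 𝒢 := fun a ha => ha.1
    obtain ⟨kx, hkx⟩ := trace x
    obtain ⟨ky, hky⟩ := trace y
    obtain ⟨S, hSx, hSy, hScon, hSsep⟩ := hK kx ky
    have cross : ∀ a ∈ Δ, (S ∩ ((φ a).2 \ (φ a).1)).Nonempty := by
      rintro a ⟨ha𝒢, hsplit⟩
      have hsub := (hpc a ha𝒢).2.2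
      have hcover : S ⊆ (φ a).2 ∪ ((φ a).1)ᶜ := by
        intro z _
        by_cases hz : z ∈ (φ a).1
        · exact Or.inl (hsub hz)
        · exact Or.inr hz
      have h1 : (S ∩ (φ a).2).Nonempty ∧ (S ∩ ((φ a).1)ᶜ).Nonempty := by
        rcases hsplit with ⟨hxa, hya⟩ | ⟨hya, hxa⟩
        · exact ⟨⟨kx, hSx, hsub ((hkx a ha𝒢).1 hxa)⟩,
            ⟨ky, hSy, fun hc => (hky a ha𝒢).2 hya (hsub hc)⟩⟩
        · exact ⟨⟨ky, hSy, hsub ((hky a ha𝒢).1 hya)⟩,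
            ⟨kx, hSx, fun hc => (hkx a ha𝒢).2 hxa (hsub hc)⟩⟩
      have hpre := hScon.isPreconnected ((φ a).2) (((φ a).1)ᶜ) (hpc a ha𝒢).2.1
        (hpc a ha𝒢).1.isOpen_compl hcover h1.1 h1.2
      rwa [diff_eq]
    obtain ⟨c, hcc, hSc⟩ := hSsep
    have cover : Δ ⊆ ⋃ d ∈ c, {a ∈ Δ | d ∈ (φ a).2 \ (φ a).1} := by
      intro a ha
      obtain ⟨p, hpS, hpE⟩ := cross a ha
      have hEopen : IsOpen ((φ a).2 \ (φ a).1) :=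
        (hpc a (hΔ𝒢 ha)).2.1.sdiff (hpc a (hΔ𝒢 ha)).1
      obtain ⟨d, hdE, hdc⟩ := mem_closure_iff.mp (hSc hpS) _ hEopen hpE
      exact mem_biUnion hdc ⟨ha, hdE⟩
    have hfiber : ∃ d ∈ c, ¬{a ∈ Δ | d ∈ (φ a).2 \ (φ a).1}.Countable := by
      by_contra hall
      push_neg at hall
      exact hunc ((hcc.biUnion hall).mono cover)
    obtain ⟨d, _, hD'⟩ := hfiber
    set Δ' : Set (Set L) := {a ∈ Δ | d ∈ (φ a).2 \ (φ a).1} with hΔ'def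
    have hΔ'𝒢 : Δ' ⊆ 𝒢 := fun a ha => hΔ𝒢 ha.1
    -- the common point d makes Δ' fully independent
    have hind : ∀ F H : Set (Set L), F.Finite → H.Finite → F ⊆ Δ' → H ⊆ Δ' → Disjoint F H →
        ((⋂ a ∈ F, (φ a).1) \ (⋃ a ∈ H, (φ a).2)).Nonempty := by
      intro F H hFf hHf hF hH hd'
      refine hard F H hFf hHf (hF.trans hΔ'𝒢) (hH.trans hΔ'𝒢) hd'
        (soft F H hFf hHf (hF.trans hΔ'𝒢) (hH.trans hΔ'𝒢) hd' ⟨d, ?_, ?_⟩)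
      · exact mem_iInter₂.mpr fun a ha => ((hF ha).2).1
      · intro hmem
        obtain ⟨a, ha, hda⟩ := mem_iUnion₂.mp hmem
        exact ((hH ha).2).2 hda
    -- build a continuous surjection onto the Tikhonov cube, contradiction
    apply hnot
    have hκcard : Cardinal.mk ((Cardinal.aleph 1).ord.ToType) ≤ Cardinal.aleph 1 := by
      rw [Cardinal.mk_toType, Cardinal.card_ord]
    obtain ⟨η⟩ := auxEmbed hκcard hD'
    set A : (Cardinal.aleph 1).ord.ToType × ℕ → Set K :=
      fun p => ((φ ((η p : ↥Δ') : Set L)).2)ᶜ with hAdef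
    set B : (Cardinal.aleph 1).ord.ToType × ℕ → Set K :=
      fun p => (φ ((η p : ↥Δ') : Set L)).1 with hBdef
    have hmem𝒢 : ∀ p, ((η p : ↥Δ') : Set L) ∈ 𝒢 := fun p => hΔ'𝒢 (η p).2
    have hA : ∀ p, IsClosed (A p) := fun p => (hpc _ (hmem𝒢 p)).2.1.isClosed_compl
    have hB : ∀ p, IsClosed (B p) := fun p => (hpc _ (hmem𝒢 p)).1
    have hdBA : ∀ p, Disjoint (B p) (A p) := by
      intro p
      rw [Set.disjoint_left]
      intro z hz hz'
      exact hz' ((hpc _ (hmem𝒢 p)).2.2 hz)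
    have hFIP : ∀ (u : Finset ((Cardinal.aleph 1).ord.ToType × ℕ))
        (ε : (Cardinal.aleph 1).ord.ToType × ℕ → Bool),
        (⋂ p ∈ u, (if ε p then A p else B p)).Nonempty := by
      intro u ε
      set F : Set (Set L) :=
        (fun p => ((η p : ↥Δ') : Set L)) '' {p | p ∈ u ∧ ε p = false} with hFdef
      set H : Set (Set L) :=
        (fun p => ((η p : ↥Δ') : Set L)) '' {p | p ∈ u ∧ ε p = true} with hHdef
      have hFf : F.Finite := (u.finite_toSet.subset fun p hp => hp.1).image _
      have hHf : H.Finite := (u.finite_toSet.subset fun p hp => hp.1).image _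
      have hFΔ : F ⊆ Δ' := by rintro s ⟨p, _, rfl⟩; exact (η p).2
      have hHΔ : H ⊆ Δ' := by rintro s ⟨p, _, rfl⟩; exact (η p).2
      have hdFH : Disjoint F H := by
        rw [Set.disjoint_left]
        rintro s ⟨p, ⟨_, hp⟩, rfl⟩ ⟨q, ⟨_, hq⟩, hqp⟩
        have he : η q = η p := Subtype.ext hqp
        have he2 : q = p := η.injective he
        rw [he2, hp] at hq
        exact Bool.false_ne_true hq
      obtain ⟨z, hz1, hz2⟩ := hind F H hFf hHf hFΔ hHΔ hdFH
      refine ⟨z, mem_iInter₂.mpr fun p hp => ?_⟩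
      cases hεp : ε p
      · rw [if_neg Bool.false_ne_true]
        exact mem_iInter₂.mp hz1 _ ⟨p, ⟨hp, hεp⟩, rfl⟩
      · rw [if_pos rfl]
        intro hzA
        exact hz2 (mem_iUnion₂.mpr ⟨_, ⟨p, ⟨hp, hεp⟩, rfl⟩, hzA⟩)
    obtain ⟨f, hfc, hfs⟩ := auxCubeSurj A B hA hB hdBA hFIP
    exact ⟨f, hfc, hfs⟩
  -- the Σ-product embedding
  set χ : Set L → L → ℝ := fun A z => if z ∈ A then 1 else 0 with hχ
  set f : L → ↥𝒢 → ℝ := fun x a => χ (a : Set L) x - χ (a : Set L) x₀ with hfdef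
  have hχcont : ∀ A : Set L, IsClopen A → Continuous (χ A) := by
    intro A hA
    rw [hχ]
    dsimp only
    apply Continuous.if ?_ continuous_const continuous_const
    intro z hz
    rw [show {z | z ∈ A} = A from rfl, hA.frontier_eq] at hz
    exact absurd hz (notMem_empty z)
  have hfc : Continuous f :=
    continuous_pi fun a => ((hχcont _ (hclopen _ a.2)).sub continuous_const)
  have hfinj : Function.Injective f := by
    intro x y hfxy
    by_contra hne
    obtain ⟨a, ha𝒢, hsplit⟩ := hsep x y hne
    have hcoord := congrFun hfxy ⟨a, ha𝒢⟩
    simp only [hfdef] at hcoord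
    have hval : χ a x = χ a y := by linarith [hcoord]
    rcases hsplit with ⟨hxa, hya⟩ | ⟨hya, hxa⟩
    · rw [hχ] at hval; dsimp only at hval
      rw [if_pos hxa, if_neg hya] at hval
      exact one_ne_zero hval
    · rw [hχ] at hval; dsimp only at hval
      rw [if_neg hxa, if_pos hya] at hval
      exact one_ne_zero hval.symm
  have hemb := (hfc.isClosedEmbedding hfinj).isEmbedding
  refine ⟨↥𝒢, Set.range f, isCompact_range hfc, ?_, ⟨hemb.toHomeomorph⟩⟩
  rintro _ ⟨x, rfl⟩
  by_cases hx0 : x = x₀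
  · have hss : {γ : ↥𝒢 | f x γ ≠ 0} = ∅ := by
      ext a
      simp [hfdef, hx0]
    rw [hss]
    exact countable_empty
  · have hsub : {γ : ↥𝒢 | f x γ ≠ 0} ⊆
        Subtype.val ⁻¹' {a | a ∈ 𝒢 ∧ ((x ∈ a ∧ x₀ ∉ a) ∨ (x₀ ∈ a ∧ x ∉ a))} := by
      intro a ha
      have hane : χ (a : Set L) x ≠ χ (a : Set L) x₀ := by
        intro hc
        apply ha
        simp only [hfdef]
        rw [hc]
        ring
      refine ⟨a.2, ?_⟩
      by_cases hxa : x ∈ (a : Set L) <;> by_cases hx0a : x₀ ∈ (a : Set L)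
      · exact absurd (by rw [hχ]; dsimp only; rw [if_pos hxa, if_pos hx0a]) hane
      · exact Or.inl ⟨hxa, hx0a⟩
      · exact Or.inr ⟨hx0a, hxa⟩
      · exact absurd (by rw [hχ]; dsimp only; rw [if_neg hxa, if_neg hx0a]) hane
    exact ((key x x₀ hx0).preimage Subtype.val_injective).mono hsub
end

section
/- Let K be a connected, separable compact Hausdorff space that does not map continuously onto the Tikhonov cube [0,1]^{ω₁} (ω₁ the first uncountable ordinal). Then every compact zero-dimensional Hausdorff space L that is a Boolean image of K is metrizable. -/
open Set

lemma summable_half : Summable (fun n : ℕ => ((1:ℝ)/2)^(n+1)) := by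
  simpa [pow_succ'] using summable_geometric_two.mul_left ((1:ℝ)/2)

lemma tsum_half : ∑' n : ℕ, ((1:ℝ)/2)^(n+1) = 1 := by
  have : (fun n : ℕ => ((1:ℝ)/2)^(n+1)) = fun n : ℕ => ((1:ℝ)/2) * ((1:ℝ)/2)^n := by
    funext n; rw [pow_succ']
  rw [this, tsum_mul_left, tsum_geometric_two]
  norm_num

open scoped Classical in
lemma exists_binary_expansion (y : ℝ) (h0 : 0 ≤ y) (h1 : y ≤ 1) :
    ∃ ε : ℕ → Bool, HasSum (fun n => if ε n then ((1:ℝ)/2)^(n+1) else 0) y := by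
  set x : ℕ → ℝ := fun n => Nat.rec y (fun _ xn => 2*xn - if (1:ℝ)/2 ≤ xn then 1 else 0) n with hxdef
  have hxs : ∀ n, x (n+1) = 2 * x n - if (1:ℝ)/2 ≤ x n then 1 else 0 := fun n => rfl
  have hmem : ∀ n, 0 ≤ x n ∧ x n ≤ 1 := by
    intro n; induction n with
    | zero => exact ⟨h0, h1⟩
    | succ n ih =>
      rw [hxs]
      rcases le_or_gt ((1:ℝ)/2) (x n) with h | h
      · rw [if_pos h]; constructor <;> linarith [ih.1, ih.2]
      · rw [if_neg (not_le.mpr h)]; constructor <;> linarith [ih.1]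
  refine ⟨fun n => decide ((1:ℝ)/2 ≤ x n), ?_⟩
  set f : ℕ → ℝ := fun n => if decide ((1:ℝ)/2 ≤ x n) then ((1:ℝ)/2)^(n+1) else 0 with hfdef
  have hf : ∀ n, f n = if (1:ℝ)/2 ≤ x n then ((1:ℝ)/2)^(n+1) else 0 := by
    intro n
    by_cases h : (1:ℝ)/2 ≤ x n <;> simp [hfdef, h]
  have hnn : ∀ n, 0 ≤ f n := by
    intro n; rw [hf]; positivity
  have hle : ∀ n, f n ≤ ((1:ℝ)/2)^(n+1) := by
    intro n; rw [hf]; split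
    · exact le_rfl
    · positivity
  have hsum : Summable f := Summable.of_nonneg_of_le hnn hle summable_half
  have hpart : ∀ n, ∑ k ∈ Finset.range n, f k = y - x n * ((1:ℝ)/2)^n := by
    intro n; induction n with
    | zero => show (0:ℝ) = y - y * 1; ring
    | succ n ih =>
      rw [Finset.sum_range_succ, ih, hf n]
      rcases le_or_gt ((1:ℝ)/2) (x n) with h | h
      · rw [if_pos h, hxs, if_pos h]; ring
      · rw [if_neg (not_le.mpr h), hxs, if_neg (not_le.mpr h)]; ring
  have htend : Filter.Tendsto (fun n => ∑ k ∈ Finset.range n, f k) Filter.atTop (nhds y) := by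
    simp only [hpart]
    have h2 : Filter.Tendsto (fun n : ℕ => x n * ((1:ℝ)/2)^n) Filter.atTop (nhds 0) := by
      apply squeeze_zero (g := fun n : ℕ => ((1:ℝ)/2)^n)
        (fun n => mul_nonneg (hmem n).1 (by positivity))
        (fun n => mul_le_of_le_one_left (by positivity) (hmem n).2)
      exact tendsto_pow_atTop_nhds_zero_of_lt_one (by norm_num) (by norm_num)
    simpa using Filter.Tendsto.const_sub y h2
  have hy : ∑' n, f n = y := tendsto_nhds_unique hsum.hasSum.tendsto_sum_nat htend
  exact hy ▸ hsum.hasSum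

universe v in
theorem countable_of_pseudoclopen_iso {K : Type*} {L : Type*}
    [TopologicalSpace K] [CompactSpace K] [T2Space K]
    [ConnectedSpace K] [TopologicalSpace.SeparableSpace K]
    (hnot : ¬ ∃ f : K → ((Cardinal.aleph (1 : Ordinal.{v})).ord.ToType → unitInterval),
      Continuous f ∧ Function.Surjective f)
    (𝒢 : Set (Set L)) (φ : Set L → Set K × Set K)
    (hφinj : Set.InjOn φ 𝒢)
    (hφpc : ∀ a ∈ 𝒢, IsClosed (φ a).1 ∧ IsOpen (φ a).2 ∧ (φ a).1 ⊆ (φ a).2)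
    (hφiso : ∀ F H : Set (Set L), F.Finite → H.Finite → F ⊆ 𝒢 → H ⊆ 𝒢 → Disjoint F H →
      ((⋂₀ F \ ⋃₀ H = ∅ → (⋂ a ∈ F, (φ a).2) \ (⋃ a ∈ H, (φ a).1) = ∅) ∧
       ((⋂ a ∈ F, (φ a).1) \ (⋃ a ∈ H, (φ a).2) = ∅ → ⋂₀ F \ ⋃₀ H = ∅))) :
    𝒢.Countable := by
  by_contra hunc
  obtain ⟨D, hDc, hDd⟩ := TopologicalSpace.exists_countable_dense K
  have fact1 : ∀ a ∈ 𝒢, (φ a).1 = ∅ → a = ∅ := by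
    intro a ha hF
    have h := (hφiso {a} ∅ (finite_singleton a) finite_empty (by simpa)
      (empty_subset _) (by simp)).2
    simpa [hF] using h
  have fact2 : ∀ a ∈ 𝒢, (φ a).2 = univ → a = univ := by
    intro a ha hF
    have h := (hφiso ∅ {a} finite_empty (finite_singleton a) (empty_subset _)
      (by simpa) (by simp)).2
    have h2 : (⋂ b ∈ (∅ : Set (Set L)), (φ b).1) \ (⋃ b ∈ ({a} : Set (Set L)), (φ b).2) = ∅ := by
      simp [hF]
    have h3 := h h2
    rw [← univ_subset_iff, ← diff_eq_empty]
    simpa using h3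
  have key : ∀ a ∈ 𝒢, a ≠ ∅ → a ≠ univ → ((φ a).2 \ (φ a).1).Nonempty := by
    intro a ha h0 h1
    rw [nonempty_iff_ne_empty]
    intro hE
    have hsub : (φ a).2 ⊆ (φ a).1 := by
      rw [← diff_eq_empty]; exact hE
    have heq : (φ a).1 = (φ a).2 := Subset.antisymm (hφpc a ha).2.2 hsub
    have hclopen : IsClopen (φ a).1 := ⟨(hφpc a ha).1, heq ▸ (hφpc a ha).2.1⟩
    rcases isClopen_iff.mp hclopen with hc | hc
    · exact h0 (fact1 a ha hc)
    · exact h1 (fact2 a ha (by rw [← heq, hc]))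
  set 𝒜fun : K → Set (Set L) := fun d => {a | a ∈ 𝒢 ∧ d ∈ (φ a).2 ∧ d ∉ (φ a).1} with h𝒜fun
  have hfiber : ∃ d, ¬ (𝒜fun d).Countable := by
    by_contra hall
    push_neg at hall
    apply hunc
    have hcover : 𝒢 ⊆ (⋃ d ∈ D, 𝒜fun d) ∪ {(∅ : Set L), univ} := by
      intro a ha
      by_cases h0 : a = ∅
      · exact Or.inr (by simp [h0])
      by_cases h1 : a = univ
      · exact Or.inr (by simp [h1])
      obtain ⟨d, hdU, hdD⟩ := hDd.inter_open_nonempty _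
        ((hφpc a ha).2.1.sdiff (hφpc a ha).1) (key a ha h0 h1)
      exact Or.inl (mem_biUnion hdD ⟨ha, hdU.1, hdU.2⟩)
    exact (((hDc.biUnion fun d _ => hall d).union
      (countable_insert.2 (countable_singleton _)))).mono hcover
  obtain ⟨d, h𝒜⟩ := hfiber
  have h𝒜𝒢 : 𝒜fun d ⊆ 𝒢 := fun a ha => ha.1
  have hdU : ∀ a ∈ 𝒜fun d, d ∈ (φ a).2 := fun a ha => ha.2.1
  have hdF : ∀ a ∈ 𝒜fun d, d ∉ (φ a).1 := fun a ha => ha.2.2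
  have main : ∀ F H : Set (Set L), F.Finite → H.Finite → F ⊆ 𝒜fun d → H ⊆ 𝒜fun d →
      Disjoint F H → ((⋂ a ∈ F, (φ a).1) \ (⋃ a ∈ H, (φ a).2)).Nonempty := by
    intro F H hF hH hFA hHA hdisj
    rw [nonempty_iff_ne_empty]
    intro hE
    have h1 := (hφiso F H hF hH (hFA.trans h𝒜𝒢) (hHA.trans h𝒜𝒢) hdisj).2 hE
    have h2 := (hφiso F H hF hH (hFA.trans h𝒜𝒢) (hHA.trans h𝒜𝒢) hdisj).1 h1
    have hdmem : d ∈ (⋂ a ∈ F, (φ a).2) \ (⋃ a ∈ H, (φ a).1) := by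
      refine ⟨mem_iInter₂.mpr fun a ha => hdU a (hFA ha), ?_⟩
      rw [mem_iUnion₂]
      push_neg
      exact fun a ha => hdF a (hHA ha)
    rw [h2] at hdmem
    exact hdmem
  -- an injection of ω₁ × ℕ into 𝒜
  obtain ⟨j⟩ : Nonempty ((Cardinal.aleph (1 : Ordinal.{v})).ord.ToType × ℕ ↪ ↥(𝒜fun d)) := by
    have huncA : Uncountable ↥(𝒜fun d) := by
      rw [← not_countable_iff, Set.countable_coe_iff]
      exact h𝒜
    rw [← Cardinal.lift_mk_le', Cardinal.mk_prod, Cardinal.mk_toType, Cardinal.card_ord,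
      Cardinal.mk_nat, Cardinal.lift_uzero, Cardinal.lift_aleph0,
      Cardinal.mul_eq_max (Cardinal.aleph0_le_aleph 1) le_rfl,
      max_eq_left (Cardinal.aleph0_le_aleph 1), Cardinal.lift_aleph, Ordinal.lift_one,
      ← Cardinal.succ_aleph0, Order.succ_le_iff, Cardinal.aleph0_lt_lift]
    exact Cardinal.aleph0_lt_mk_iff.mpr huncA
  set A : (Cardinal.aleph (1 : Ordinal.{v})).ord.ToType × ℕ → Set L :=
    fun p => ((j p : ↥(𝒜fun d)) : Set L) with hAdef
  have hAinj : Function.Injective A := fun p q h => j.injective (Subtype.ext h)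
  have hA : ∀ p, A p ∈ 𝒜fun d := fun p => (j p).2
  -- Urysohn functions
  have hgex : ∀ p : (Cardinal.aleph (1 : Ordinal.{v})).ord.ToType × ℕ, ∃ g : C(K, ℝ),
      EqOn g 0 ((φ (A p)).2)ᶜ ∧ EqOn g 1 (φ (A p)).1 ∧ ∀ x, g x ∈ Icc (0:ℝ) 1 := by
    intro p
    exact exists_continuous_zero_one_of_isClosed
      ((hφpc _ (h𝒜𝒢 (hA p))).2.1.isClosed_compl) (hφpc _ (h𝒜𝒢 (hA p))).1
      (disjoint_compl_left.mono_right (hφpc _ (h𝒜𝒢 (hA p))).2.2)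
  choose g hg0 hg1 hg01 using hgex
  have hfsummable : ∀ t (x : K), Summable fun n : ℕ => g (t, n) x * ((1:ℝ)/2)^(n+1) := by
    intro t x
    apply Summable.of_nonneg_of_le (fun n => mul_nonneg (hg01 (t,n) x).1 (by positivity))
      (fun n => ?_) summable_half
    calc g (t,n) x * ((1:ℝ)/2)^(n+1) ≤ 1 * ((1:ℝ)/2)^(n+1) :=
          mul_le_mul_of_nonneg_right (hg01 (t,n) x).2 (by positivity)
      _ = ((1:ℝ)/2)^(n+1) := one_mul _
  have hmem : ∀ t (x : K), (∑' n : ℕ, g (t, n) x * ((1:ℝ)/2)^(n+1)) ∈ Icc (0:ℝ) 1 := by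
    intro t x
    constructor
    · exact tsum_nonneg (fun n => mul_nonneg (hg01 (t,n) x).1 (by positivity))
    · calc (∑' n : ℕ, g (t, n) x * ((1:ℝ)/2)^(n+1)) ≤ ∑' n : ℕ, ((1:ℝ)/2)^(n+1) := by
            apply Summable.tsum_le_tsum (fun n => ?_) (hfsummable t x) summable_half
            calc g (t,n) x * ((1:ℝ)/2)^(n+1) ≤ 1 * ((1:ℝ)/2)^(n+1) :=
                  mul_le_mul_of_nonneg_right (hg01 (t,n) x).2 (by positivity)
              _ = ((1:ℝ)/2)^(n+1) := one_mul _
        _ = 1 := tsum_half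
  apply hnot
  refine ⟨fun x t => ⟨∑' n : ℕ, g (t, n) x * ((1:ℝ)/2)^(n+1), hmem t x⟩, ?_, ?_⟩
  · apply continuous_pi
    intro t
    apply Continuous.subtype_mk
    apply continuous_tsum (fun n => ((g (t,n)).continuous.mul continuous_const)) summable_half
    intro n x
    show ‖g (t,n) x * ((1:ℝ)/2)^(n+1)‖ ≤ ((1:ℝ)/2)^(n+1)
    rw [Real.norm_eq_abs, abs_of_nonneg (mul_nonneg (hg01 (t,n) x).1 (by positivity : (0:ℝ) ≤ ((1:ℝ)/2)^(n+1)))]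
    calc g (t,n) x * ((1:ℝ)/2)^(n+1) ≤ 1 * ((1:ℝ)/2)^(n+1) :=
          mul_le_mul_of_nonneg_right (hg01 (t,n) x).2 (by positivity)
      _ = ((1:ℝ)/2)^(n+1) := one_mul _
  · intro y
    have hbin : ∀ t, ∃ ε : ℕ → Bool,
        HasSum (fun n => if ε n then ((1:ℝ)/2)^(n+1) else 0) ((y t : ℝ)) :=
      fun t => exists_binary_expansion _ (y t).2.1 (y t).2.2
    choose ε hε using hbin
    set C : (Cardinal.aleph (1 : Ordinal.{v})).ord.ToType × ℕ → Set K := fun p =>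
      if ε p.1 p.2 then (φ (A p)).1 else ((φ (A p)).2)ᶜ with hC
    have hCclosed : ∀ p, IsClosed (C p) := by
      intro p
      by_cases h : ε p.1 p.2
      · simpa [hC, h] using (hφpc _ (h𝒜𝒢 (hA p))).1
      · simpa [hC, h] using (hφpc _ (h𝒜𝒢 (hA p))).2.1.isClosed_compl
    have hCne : (⋂ p, C p).Nonempty := by
      rw [nonempty_iff_ne_empty]
      intro hE
      obtain ⟨u, hu⟩ := isCompact_univ.elim_finite_subfamily_closed C hCclosed (by simpa using hE)
      set F : Set (Set L) := A '' {p | p ∈ u ∧ ε p.1 p.2 = true} with hFdef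
      set H : Set (Set L) := A '' {p | p ∈ u ∧ ε p.1 p.2 = false} with hHdef
      have hFfin : F.Finite := (u.finite_toSet.subset (fun p hp => hp.1)).image A
      have hHfin : H.Finite := (u.finite_toSet.subset (fun p hp => hp.1)).image A
      have hFA : F ⊆ 𝒜fun d := by rintro a ⟨p, _, rfl⟩; exact hA p
      have hHA : H ⊆ 𝒜fun d := by rintro a ⟨p, _, rfl⟩; exact hA p
      have hdisj : Disjoint F H := by
        rw [Set.disjoint_left]
        rintro a ⟨p, ⟨hpu, hpt⟩, rfl⟩ ⟨q, ⟨hqu, hqf⟩, hqa⟩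
        have := hAinj hqa
        rw [this] at hqf
        rw [hpt] at hqf
        simp at hqf
      obtain ⟨x, hx⟩ := main F H hFfin hHfin hFA hHA hdisj
      have hxC : ∀ p ∈ u, x ∈ C p := by
        intro p hp
        by_cases h : ε p.1 p.2
        · have hmemF : A p ∈ F := ⟨p, ⟨hp, h⟩, rfl⟩
          simp only [hC, if_pos h]
          exact mem_iInter₂.mp hx.1 _ hmemF
        · have hmemH : A p ∈ H := ⟨p, ⟨hp, Bool.eq_false_iff.mpr h⟩, rfl⟩
          simp only [hC, if_neg h]
          rw [mem_compl_iff]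
          intro hcontra
          exact hx.2 (mem_iUnion₂.mpr ⟨_, hmemH, hcontra⟩)
      rw [eq_empty_iff_forall_notMem] at hu
      exact hu x ⟨mem_univ x, mem_iInter₂.mpr hxC⟩
    obtain ⟨x, hx⟩ := hCne
    refine ⟨x, funext fun t => Subtype.ext ?_⟩
    show (∑' n : ℕ, g (t, n) x * ((1:ℝ)/2)^(n+1)) = ((y t : ℝ))
    rw [← (hε t).tsum_eq]
    apply tsum_congr
    intro n
    have hxp := mem_iInter.mp hx (t, n)
    by_cases h : ε t n
    · rw [if_pos h]
      have hx1 : x ∈ (φ (A (t,n))).1 := by simpa [hC, h] using hxp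
      have := hg1 (t,n) hx1
      simp only [Pi.one_apply] at this
      rw [this, one_mul]
    · rw [if_neg h]
      have hx0 : x ∈ ((φ (A (t,n))).2)ᶜ := by simpa [hC, h] using hxp
      have := hg0 (t,n) hx0
      simp only [Pi.zero_apply] at this
      rw [this, zero_mul]

/-- If `K` is connected, separable, compact Hausdorff and does not
map continuously onto `[0,1]^{ω₁}`, then every Boolean image of `K` is metrizable. -/
theorem metrizable_of_boolean_image_of_separable_connected {K : Type*}
    [TopologicalSpace K] [CompactSpace K] [T2Space K]
    [ConnectedSpace K] [TopologicalSpace.SeparableSpace K]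
    (hnot : ¬ ∃ f : K → ((Cardinal.aleph 1).ord.ToType → unitInterval),
      Continuous f ∧ Function.Surjective f)
    (L : Type*) [TopologicalSpace L] [CompactSpace L] [T2Space L]
    [TotallyDisconnectedSpace L]
    (hL : IsBooleanImage L K) : TopologicalSpace.MetrizableSpace L := by
  obtain ⟨𝒢, φ, hclope, hsep, hφinj, hφpc, hφiso⟩ := hL
  have hcount : 𝒢.Countable := countable_of_pseudoclopen_iso hnot 𝒢 φ hφinj hφpc hφiso
  haveI : Countable ↥𝒢 := hcount.to_subtype
  set e : L → (↥𝒢 → Bool) := fun x a => (a : Set L).boolIndicator x with hedef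
  have hec : Continuous e := continuous_pi fun a =>
    (continuous_boolIndicator_iff_isClopen _).mpr (hclope a a.2)
  have hei : Function.Injective e := by
    intro x y hxy
    by_contra hne
    obtain ⟨a, ha, hcase⟩ := hsep x y hne
    have h : (a : Set L).boolIndicator x = (a : Set L).boolIndicator y :=
      congrFun hxy ⟨a, ha⟩
    rcases hcase with ⟨h1, h2⟩ | ⟨h1, h2⟩
    · rw [(Set.mem_iff_boolIndicator a x).mp h1, (Set.notMem_iff_boolIndicator a y).mp h2] at h
      simp at h
    · rw [(Set.mem_iff_boolIndicator a y).mp h1, (Set.notMem_iff_boolIndicator a x).mp h2] at h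
      simp at h
  haveI : SecondCountableTopology L :=
    (hec.isClosedEmbedding hei).toIsEmbedding.secondCountableTopology
  infer_instance
end

section
/- Let T be a tree and let L ⊆ 2^T be the tree space of T. Then there exists a compact connected Hausdorff space K such that L is a Boolean image of K. Moreover, if every chain (equivalently every branch) of T is countable, then there exists a path-connected compact Hausdorff space K such that L is a Boolean image of K. -/
open Set

/-- The tree space of `T`: the characteristic functions (into `Bool`) of the
downward closed chains of `T`, as a subset of the Cantor cube `2^T`. -/
def TreeSpace (T : Type*) [PartialOrder T] : Set (T → Bool) :=
  {x | IsChain (· ≤ ·) {t | x t = true} ∧ ∀ s t : T, s ≤ t → x t = true → x s = true}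

open scoped ENNReal

set_option linter.unusedSectionVars false
set_option linter.unusedVariables false

universe u

section Aux

variable {T : Type u} [PartialOrder T]

/-- The auxiliary connected compact space: "tree of intervals". -/
def KSet (T : Type u) [PartialOrder T] : Set (T → ℝ≥0∞) :=
  {f | (∀ t, f t ≤ 1) ∧ (∀ s t : T, s < t → f t = 0 ∨ f s = 1) ∧
    (∀ s t : T, ¬ s ≤ t → ¬ t ≤ s → f s = 0 ∨ f t = 0)}

lemma zero_mem_KSet : (0 : T → ℝ≥0∞) ∈ KSet T :=
  ⟨fun _ => zero_le, fun _ _ _ => Or.inl rfl, fun _ _ _ _ => Or.inl rfl⟩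

lemma isClosed_KSet : IsClosed (KSet T) := by
  have h1 : IsClosed {f : T → ℝ≥0∞ | ∀ t, f t ≤ 1} := by
    rw [Set.setOf_forall]
    exact isClosed_iInter fun t => IsClosed.preimage (continuous_apply t) isClosed_Iic
  have h2 : IsClosed {f : T → ℝ≥0∞ | ∀ s t : T, s < t → f t = 0 ∨ f s = 1} := by
    rw [Set.setOf_forall]
    refine isClosed_iInter fun s => ?_
    rw [Set.setOf_forall]
    refine isClosed_iInter fun t => ?_
    by_cases hst : s < t
    · have : {f : T → ℝ≥0∞ | s < t → f t = 0 ∨ f s = 1}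
          = {f : T → ℝ≥0∞ | f t = 0} ∪ {f | f s = 1} := by
        ext f; simp [hst]
      rw [this]
      exact (isClosed_eq (continuous_apply t) continuous_const).union
        (isClosed_eq (continuous_apply s) continuous_const)
    · have : {f : T → ℝ≥0∞ | s < t → f t = 0 ∨ f s = 1} = univ := by
        ext f; simp [hst]
      rw [this]; exact isClosed_univ
  have h3 : IsClosed {f : T → ℝ≥0∞ | ∀ s t : T, ¬ s ≤ t → ¬ t ≤ s → f s = 0 ∨ f t = 0} := by
    rw [Set.setOf_forall]
    refine isClosed_iInter fun s => ?_
    rw [Set.setOf_forall]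
    refine isClosed_iInter fun t => ?_
    by_cases hst : ¬ s ≤ t ∧ ¬ t ≤ s
    · have : {f : T → ℝ≥0∞ | ¬s ≤ t → ¬t ≤ s → f s = 0 ∨ f t = 0}
          = {f : T → ℝ≥0∞ | f s = 0} ∪ {f | f t = 0} := by
        ext f; simp [hst.1, hst.2]
      rw [this]
      exact (isClosed_eq (continuous_apply s) continuous_const).union
        (isClosed_eq (continuous_apply t) continuous_const)
    · have : {f : T → ℝ≥0∞ | ¬s ≤ t → ¬t ≤ s → f s = 0 ∨ f t = 0} = univ := by
        ext f
        simp only [mem_setOf_eq, mem_univ, iff_true]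
        intro h1' h2'; exact absurd ⟨h1', h2'⟩ hst
      rw [this]; exact isClosed_univ
  have : KSet T = _ ∩ (_ ∩ _) := rfl
  exact h1.inter (h2.inter h3)

lemma compactSpace_KSet : CompactSpace ↥(KSet T) :=
  isCompact_iff_compactSpace.mp (isClosed_KSet.isCompact)

/-- Elements below a common point are comparable, in a tree. -/
lemma below_comparable (htree : ∀ t : T, IsChain (· ≤ ·) {s | s < t} ∧ Set.IsWF {s | s < t})
    {u v t : T} (hu : u ≤ t) (hv : v ≤ t) : u ≤ v ∨ v ≤ u := by
  rcases eq_or_ne u v with rfl | huv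
  · exact Or.inl le_rfl
  rcases eq_or_lt_of_le hu with rfl | hu'
  · exact Or.inr hv
  rcases eq_or_lt_of_le hv with rfl | hv'
  · exact Or.inl hu
  exact (htree t).1 hu' hv' huv

/-- Any two elements of `KSet` below a common element are comparable. -/
lemma KSet.le_total_of_le {b g h : T → ℝ≥0∞} (hb : b ∈ KSet T) (hg : g ∈ KSet T)
    (hh : h ∈ KSet T) (hgb : g ≤ b) (hhb : h ≤ b) : g ≤ h ∨ h ≤ g := by
  by_cases hgh : g ≤ h
  · exact Or.inl hgh
  right
  rw [Pi.le_def] at hgh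
  push_neg at hgh
  obtain ⟨t₁, ht₁⟩ := hgh
  intro t
  rcases eq_or_ne (h t) 0 with h0 | h0
  · simp [h0]
  have hbt : b t ≠ 0 := fun e => h0 (le_antisymm (e ▸ hhb t) (zero_le))
  have hgt₁ : g t₁ ≠ 0 := fun e => by simp [e] at ht₁
  have hbt₁ : b t₁ ≠ 0 := fun e => hgt₁ (le_antisymm (e ▸ hgb t₁) (zero_le))
  have hcomp : t ≤ t₁ ∨ t₁ ≤ t := by
    by_contra hc
    push_neg at hc
    rcases hb.2.2 t t₁ hc.1 hc.2 with e | e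
    · exact hbt e
    · exact hbt₁ e
  rcases hcomp with hle | hle
  · rcases eq_or_lt_of_le hle with rfl | hlt
    · exact le_of_lt ht₁
    · rcases hg.2.1 t t₁ hlt with e | e
      · exact absurd e hgt₁
      · rw [e]; exact hh.1 t
  · rcases eq_or_lt_of_le hle with rfl | hlt
    · exact le_of_lt ht₁
    · rcases hh.2.1 t₁ t hlt with e | e
      · exact absurd e h0
      · exfalso
        rw [e] at ht₁
        exact absurd (hg.1 t₁) (not_le.mpr ht₁)

/-- Any nonempty subset of the support of an element of `KSet` has a minimum. -/
lemma exists_min_of_subset_supp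
    (htree : ∀ t : T, IsChain (· ≤ ·) {s | s < t} ∧ Set.IsWF {s | s < t})
    {b : T → ℝ≥0∞} (hb : b ∈ KSet T) {D : Set T} (hD : ∀ t ∈ D, b t ≠ 0)
    (hne : D.Nonempty) : ∃ m ∈ D, ∀ d ∈ D, m ≤ d := by
  have hcomp : ∀ d ∈ D, ∀ d' ∈ D, d ≤ d' ∨ d' ≤ d := by
    intro d hd d' hd'
    by_contra hc
    push_neg at hc
    rcases hb.2.2 d d' hc.1 hc.2 with e | e
    · exact hD d hd e
    · exact hD d' hd' e
  obtain ⟨t₁, ht₁⟩ := hne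
  by_cases hE : {s | s ∈ D ∧ s < t₁}.Nonempty
  · have hWF : {s | s ∈ D ∧ s < t₁}.IsWF := (htree t₁).2.subset (fun s hs => hs.2)
    refine ⟨hWF.min hE, (hWF.min_mem hE).1, fun d hd => ?_⟩
    rcases hcomp d hd _ (hWF.min_mem hE).1 with hle | hle
    · rcases eq_or_lt_of_le hle with e | hlt
      · exact e.ge
      · exact absurd hlt (hWF.not_lt_min hE ⟨hd, hlt.trans (hWF.min_mem hE).2⟩)
    · exact hle
  · refine ⟨t₁, ht₁, fun d hd => ?_⟩
    rcases hcomp t₁ ht₁ d hd with hle | hle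
    · exact hle
    · rcases eq_or_lt_of_le hle with e | hlt
      · exact e.ge
      · exact absurd ⟨hd, hlt⟩ (fun h => hE ⟨d, h⟩)

lemma isClosed_le_fn (b : T → ℝ≥0∞) : IsClosed {g : T → ℝ≥0∞ | g ≤ b} := by
  have : {g : T → ℝ≥0∞ | g ≤ b} = ⋂ t, {g : T → ℝ≥0∞ | g t ≤ b t} := by
    ext g; simp [Pi.le_def, Set.mem_iInter]
  rw [this]
  exact isClosed_iInter fun t => IsClosed.preimage (continuous_apply t) isClosed_Iic

lemma core_connl (htree : ∀ t : T, IsChain (· ≤ ·) {s | s < t} ∧ Set.IsWF {s | s < t})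
    {v : T → ℝ≥0∞} (hv : v ∈ KSet T) {U W : Set (T → ℝ≥0∞)} (hU : IsOpen U) (hW : IsOpen W)
    (hcover : KSet T ∩ {g | g ≤ v} ⊆ U ∪ W) (hzero : (0 : T → ℝ≥0∞) ∈ U)
    {b : T → ℝ≥0∞} (hbK : b ∈ KSet T) (hbv : b ≤ v) (hbW : b ∈ W)
    (hempty : KSet T ∩ {g | g ≤ v} ∩ (U ∩ W) = ∅) : False := by
  classical
  set S : Set (T → ℝ≥0∞) := {g | g ∈ KSet T ∧ g ≤ b ∧ g ∈ U} with hSdef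
  have hS0 : (0 : T → ℝ≥0∞) ∈ S := ⟨zero_mem_KSet, fun t => zero_le, hzero⟩
  set gs : T → ℝ≥0∞ := fun t => ⨆ g : S, (g : T → ℝ≥0∞) t with hgsdef
  have hle : ∀ g ∈ S, g ≤ gs := fun g hg t => le_iSup (fun g : S => (g : T → ℝ≥0∞) t) ⟨g, hg⟩
  have hgsb : gs ≤ b := fun t => iSup_le fun g => g.2.2.1 t
  -- upper bounds for finite families in the chain S
  have hdir : ∀ (I : Finset T) (ch : T → (T → ℝ≥0∞)), (∀ t ∈ I, ch t ∈ S) →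
      ∃ g ∈ S, ∀ t ∈ I, ch t ≤ g := by
    intro I
    induction I using Finset.induction_on with
    | empty => exact fun ch _ => ⟨0, hS0, by simp⟩
    | @insert a I ha ih =>
      intro ch hch
      obtain ⟨g, hg, hgI⟩ := ih ch (fun t ht => hch t (Finset.mem_insert_of_mem ht))
      have hcha : ch a ∈ S := hch a (Finset.mem_insert_self a I)
      rcases KSet.le_total_of_le hbK hcha.1 hg.1 hcha.2.1 hg.2.1 with hle' | hle'
      · exact ⟨g, hg, fun t ht => by
          rcases Finset.mem_insert.mp ht with rfl | ht'
          · exact hle'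
          · exact hgI t ht'⟩
      · exact ⟨ch a, hcha, fun t ht => by
          rcases Finset.mem_insert.mp ht with rfl | ht'
          · exact le_rfl
          · exact (hgI t ht').trans hle'⟩
  -- gs is in the closure of S
  have hclos : gs ∈ closure S := by
    rw [mem_closure_iff]
    intro O hO hgsO
    obtain ⟨I, u, hIu, hpi⟩ := isOpen_pi_iff.mp hO gs hgsO
    have hCt : ∀ t : T, ∃ gt, t ∈ I → gt ∈ S ∧ Icc (gt t) (gs t) ⊆ u t := by
      intro t
      by_cases ht : t ∈ I
      · rcases eq_or_ne (gs t) 0 with e | hne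
        · refine ⟨0, fun _ => ⟨hS0, fun x hx => ?_⟩⟩
          have hxe : x = gs t := le_antisymm hx.2 (by rw [e]; exact zero_le)
          rw [hxe]; exact (hIu t ht).2
        · have hpos : (0 : ℝ≥0∞) < gs t := pos_iff_ne_zero.mpr hne
          obtain ⟨l, hl, hIoc⟩ := exists_Ioc_subset_of_mem_nhds
            ((hIu t ht).1.mem_nhds (hIu t ht).2) ⟨0, hpos⟩
          have : ∃ g : S, l < (g : T → ℝ≥0∞) t := by
            rw [← lt_iSup_iff]; exact hl
          obtain ⟨⟨g, hg⟩, hgl⟩ := this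
          exact ⟨g, fun _ => ⟨hg, fun x hx => hIoc ⟨lt_of_lt_of_le hgl hx.1, hx.2⟩⟩⟩
      · exact ⟨0, fun h => absurd h ht⟩
    choose ch hch using hCt
    obtain ⟨g, hg, hgub⟩ := hdir I ch (fun t ht => (hch t ht).1)
    refine ⟨g, hpi fun t ht => ?_, hg⟩
    exact (hch t ht).2 ⟨(hgub t ht) t, hle g hg t⟩
  have hgsKb : gs ∈ KSet T ∧ gs ≤ b := by
    have hsub : S ⊆ KSet T ∩ {g | g ≤ b} := fun g hg => ⟨hg.1, hg.2.1⟩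
    have := closure_minimal hsub (isClosed_KSet.inter (isClosed_le_fn b)) hclos
    exact ⟨this.1, this.2⟩
  have hgsA : gs ∈ KSet T ∩ {g | g ≤ v} := ⟨hgsKb.1, hgsKb.2.trans hbv⟩
  have hgsU : gs ∈ U := by
    rcases hcover hgsA with h | h
    · exact h
    · exfalso
      obtain ⟨x, hxW, hxS⟩ := mem_closure_iff.mp hclos W hW h
      have : x ∈ KSet T ∩ {g | g ≤ v} ∩ (U ∩ W) :=
        ⟨⟨hxS.1, (hxS.2.1).trans hbv⟩, hxS.2.2, hxW⟩
      rw [hempty] at this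
      exact this
  have hgsS : gs ∈ S := ⟨hgsKb.1, hgsKb.2, hgsU⟩
  have hgsne : gs ≠ b := by
    intro he
    have : b ∈ KSet T ∩ {g | g ≤ v} ∩ (U ∩ W) := ⟨⟨hbK, hbv⟩, he ▸ hgsU, hbW⟩
    rw [hempty] at this
    exact this
  -- minimal coordinate where gs < b
  have hDne : {t | gs t < b t}.Nonempty := by
    by_contra h
    have h' : ∀ t, ¬ gs t < b t := fun t ht => h ⟨t, ht⟩
    exact hgsne (funext fun t => le_antisymm (hgsb t) (not_lt.mp (h' t)))
  obtain ⟨m, hmD, hmmin⟩ := exists_min_of_subset_supp htree hbK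
    (D := {t | gs t < b t})
    (fun t ht => (lt_of_le_of_lt (zero_le) ht).ne') hDne
  have hmlt : gs m < b m := hmD
  -- bump up at m, staying in U
  obtain ⟨I, u, hIu, hpi⟩ := isOpen_pi_iff.mp hU gs hgsU
  obtain ⟨m', hm'1, hm'2, hm'3⟩ : ∃ m', gs m < m' ∧ m' < b m ∧ (m ∈ I → m' ∈ u m) := by
    by_cases hmI : m ∈ I
    · obtain ⟨y, hy, hIco⟩ := exists_Ico_subset_of_mem_nhds
        ((hIu m hmI).1.mem_nhds (hIu m hmI).2) ⟨b m, hmlt⟩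
      obtain ⟨m', hm'l, hm'r⟩ := exists_between (lt_min hy hmlt)
      exact ⟨m', hm'l, hm'r.trans_le (min_le_right _ _),
        fun _ => hIco ⟨hm'l.le, hm'r.trans_le (min_le_left _ _)⟩⟩
    · obtain ⟨m', hm'l, hm'r⟩ := exists_between hmlt
      exact ⟨m', hm'l, hm'r, fun h => absurd h hmI⟩
  set h : T → ℝ≥0∞ := Function.update gs m m' with hhdef
  have hhm : h m = m' := Function.update_self m m' gs
  have hhne : ∀ t ≠ m, h t = gs t := fun t ht => Function.update_of_ne ht m' gs
  have hbm0 : b m ≠ 0 := (lt_of_le_of_lt (zero_le) hmlt).ne'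
  have hhK : h ∈ KSet T := by
    refine ⟨fun t => ?_, fun s t hst => ?_, fun s t h1 h2 => ?_⟩
    · rcases eq_or_ne t m with rfl | ht
      · rw [hhm]; exact hm'2.le.trans (hbK.1 t)
      · rw [hhne t ht]; exact hgsKb.1.1 t
    · rcases eq_or_ne t m with rfl | htm
      · right
        have hsm : s ≠ t := hst.ne
        rw [hhne s hsm]
        have hbs : b s = 1 := by
          rcases hbK.2.1 s t hst with e | e
          · exact absurd e hbm0
          · exact e
        have hsD : ¬ gs s < b s := fun hc => absurd (hmmin s hc) hst.not_ge
        exact le_antisymm (hgsKb.1.1 s) (hbs ▸ not_lt.mp hsD)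
      · rcases eq_or_ne s m with rfl | hsm
        · left
          rw [hhne t htm]
          by_contra hc
          rcases hgsKb.1.2.1 s t hst with e | e
          · exact hc e
          · rw [e] at hmlt
            exact absurd (hbK.1 s) (not_le.mpr hmlt)
        · rw [hhne t htm, hhne s hsm]
          exact hgsKb.1.2.1 s t hst
    · rcases eq_or_ne s m with rfl | hsm
      · right
        have htm : t ≠ s := fun e => h2 (e ▸ le_rfl)
        rw [hhne t htm]
        by_contra hc
        have hbt : b t ≠ 0 := fun e => hc (le_antisymm (e ▸ hgsb t) (zero_le))
        rcases hbK.2.2 s t h1 h2 with e | e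
        · exact hbm0 e
        · exact hbt e
      · rcases eq_or_ne t m with rfl | htm
        · left
          rw [hhne s hsm]
          by_contra hc
          have hbs : b s ≠ 0 := fun e => hc (le_antisymm (e ▸ hgsb s) (zero_le))
          rcases hbK.2.2 s t h1 h2 with e | e
          · exact hbs e
          · exact hbm0 e
        · rw [hhne s hsm, hhne t htm]
          exact hgsKb.1.2.2 s t h1 h2
  have hhb : h ≤ b := by
    intro t
    rcases eq_or_ne t m with rfl | ht
    · rw [hhm]; exact hm'2.le
    · rw [hhne t ht]; exact hgsb t
  have hhU : h ∈ U := by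
    apply hpi
    intro t ht
    rcases eq_or_ne t m with rfl | htm
    · rw [hhm]; exact hm'3 ht
    · rw [hhne t htm]; exact (hIu t ht).2
  have : h ≤ gs := hle h ⟨hhK, hhb, hhU⟩
  have := this m
  rw [hhm] at this
  exact absurd hm'1 (not_lt.mpr this)

lemma isPreconnected_KInt (htree : ∀ t : T, IsChain (· ≤ ·) {s | s < t} ∧ Set.IsWF {s | s < t})
    {v : T → ℝ≥0∞} (hv : v ∈ KSet T) : IsPreconnected (KSet T ∩ {g | g ≤ v}) := by
  intro U W hU hW hcover ⟨a, haA, haU⟩ ⟨b, hbA, hbW⟩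
  by_contra hne
  have hempty : KSet T ∩ {g | g ≤ v} ∩ (U ∩ W) = ∅ := not_nonempty_iff_eq_empty.mp hne
  have h0A : (0 : T → ℝ≥0∞) ∈ KSet T ∩ {g | g ≤ v} := ⟨zero_mem_KSet, fun t => zero_le⟩
  rcases hcover h0A with h0U | h0W
  · exact core_connl htree hv hU hW hcover h0U hbA.1 hbA.2 hbW hempty
  · refine core_connl htree hv hW hU ?_ h0W haA.1 haA.2 haU ?_
    · rw [Set.union_comm]; exact hcover
    · rw [Set.inter_comm W U]; exact hempty

lemma isConnected_KSet (htree : ∀ t : T, IsChain (· ≤ ·) {s | s < t} ∧ Set.IsWF {s | s < t}) :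
    IsConnected (KSet T) := by
  refine ⟨⟨0, zero_mem_KSet⟩, ?_⟩
  have he : KSet T = ⋃₀ {A | ∃ v ∈ KSet T, A = KSet T ∩ {g | g ≤ v}} := by
    ext g
    constructor
    · intro hg
      exact ⟨KSet T ∩ {g' | g' ≤ g}, ⟨g, hg, rfl⟩, hg, le_refl g⟩
    · rintro ⟨A, ⟨v, hv, rfl⟩, hgA⟩
      exact hgA.1
  rw [he]
  refine isPreconnected_sUnion 0 _ ?_ ?_
  · rintro s ⟨v, hv, rfl⟩
    exact ⟨zero_mem_KSet, fun t => zero_le⟩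
  · rintro s ⟨v, hv, rfl⟩
    exact isPreconnected_KInt htree hv

/-- The basic clopen sets of the tree space. -/
def Vt (T : Type u) [PartialOrder T] (t : T) : Set ↥(TreeSpace T) :=
  {x | (x : T → Bool) t = true}

/-- The closed part of the pseudoclopen associated to `t`. -/
def Am (T : Type u) [PartialOrder T] (t : T) : Set ↥(KSet T) :=
  {g | (g : T → ℝ≥0∞) t = 1}

/-- The open part of the pseudoclopen associated to `t`. -/
def Ap (T : Type u) [PartialOrder T] (t : T) : Set ↥(KSet T) :=
  {g | (g : T → ℝ≥0∞) t ≠ 0}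

open Classical in
/-- The characteristic function of `↓t` as an element of `KSet`. -/
noncomputable def chi (T : Type u) [PartialOrder T] (t : T) : T → ℝ≥0∞ :=
  fun u => if u ≤ t then 1 else 0

lemma chi_mem (htree : ∀ t : T, IsChain (· ≤ ·) {s | s < t} ∧ Set.IsWF {s | s < t}) (t : T) :
    chi T t ∈ KSet T := by
  classical
  refine ⟨fun u => ?_, fun s u hsu => ?_, fun s u h1 h2 => ?_⟩
  · unfold chi; split <;> simp
  · unfold chi
    by_cases hu : u ≤ t
    · right; rw [if_pos ((hsu.le).trans hu)]
    · left; rw [if_neg hu]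
  · unfold chi
    by_cases hs : s ≤ t
    · by_cases hu : u ≤ t
      · rcases below_comparable htree hs hu with h | h
        · exact absurd h h1
        · exact absurd h h2
      · right; rw [if_neg hu]
    · left; rw [if_neg hs]

lemma chi_mem_Ap_iff (htree : ∀ t : T, IsChain (· ≤ ·) {s | s < t} ∧ Set.IsWF {s | s < t})
    {s t : T} : (⟨chi T t, chi_mem htree t⟩ : ↥(KSet T)) ∈ Ap T s ↔ s ≤ t := by
  classical
  simp only [Ap, Set.mem_setOf_eq, chi]
  by_cases h : s ≤ t <;> simp [h]

lemma Vt_inj (htree : ∀ t : T, IsChain (· ≤ ·) {s | s < t} ∧ Set.IsWF {s | s < t}) :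
    Function.Injective (Vt T) := by
  classical
  intro s t hst
  -- the characteristic function of `↓t` is in the tree space
  have hmem : ∀ t : T, (fun u => decide (u ≤ t)) ∈ TreeSpace T := by
    intro t
    constructor
    · intro u hu v hv huv
      simp only [Set.mem_setOf_eq, decide_eq_true_eq] at hu hv
      exact below_comparable htree hu hv
    · intro a b hab hb
      simp only [decide_eq_true_eq] at hb ⊢
      exact hab.trans hb
  have key : ∀ s t : T, Vt T s = Vt T t → s ≤ t := by
    intro s t h
    have h1 : (⟨_, hmem t⟩ : ↥(TreeSpace T)) ∈ Vt T t := by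
      simp [Vt]
    rw [← h] at h1
    simpa [Vt] using h1
  exact le_antisymm (key s t hst) (key t s hst.symm)

open Classical in
noncomputable def phiK (T : Type u) [PartialOrder T] :
    Set ↥(TreeSpace T) → Set ↥(KSet T) × Set ↥(KSet T) := fun a =>
  if h : ∃ t, a = Vt T t then (Am T h.choose, Ap T h.choose) else (∅, ∅)

lemma phiK_Vt (htree : ∀ t : T, IsChain (· ≤ ·) {s | s < t} ∧ Set.IsWF {s | s < t}) (t : T) :
    phiK T (Vt T t) = (Am T t, Ap T t) := by
  classical
  have h : ∃ t', Vt T t = Vt T t' := ⟨t, rfl⟩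
  have hc : h.choose = t := (Vt_inj htree h.choose_spec.symm)
  rw [phiK, dif_pos h, hc]

lemma isBooleanImage_KSet
    (htree : ∀ t : T, IsChain (· ≤ ·) {s | s < t} ∧ Set.IsWF {s | s < t}) :
    IsBooleanImage ↥(TreeSpace T) ↥(KSet T) := by
  classical
  refine ⟨Set.range (Vt T), phiK T, ?_, ?_, ?_, ?_, ?_⟩
  · -- clopen
    rintro a ⟨t, rfl⟩
    have : Vt T t = (fun x : ↥(TreeSpace T) => (x : T → Bool) t) ⁻¹' {true} := by
      ext x; simp [Vt]
    rw [this]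
    exact (isClopen_discrete {true}).preimage ((continuous_apply t).comp continuous_subtype_val)
  · -- separates points
    intro x y hxy
    have hne : (x : T → Bool) ≠ (y : T → Bool) := fun e => hxy (Subtype.ext e)
    obtain ⟨t, ht⟩ := Function.ne_iff.mp hne
    refine ⟨Vt T t, ⟨t, rfl⟩, ?_⟩
    cases hxt : (x : T → Bool) t <;> cases hyt : (y : T → Bool) t
    · rw [hxt, hyt] at ht; exact absurd rfl ht
    · right
      refine ⟨hyt, ?_⟩
      simp only [Vt, Set.mem_setOf_eq, hxt]
      exact Bool.false_ne_true
    · left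
      refine ⟨hxt, ?_⟩
      simp only [Vt, Set.mem_setOf_eq, hyt]
      exact Bool.false_ne_true
    · rw [hxt, hyt] at ht; exact absurd rfl ht
  · -- injective
    rintro a ⟨s, rfl⟩ b ⟨t, rfl⟩ hab
    rw [phiK_Vt htree s, phiK_Vt htree t] at hab
    have hAp : Ap T s = Ap T t := congrArg Prod.snd hab
    have hst : s ≤ t := by
      have h1 : (⟨chi T t, chi_mem htree t⟩ : ↥(KSet T)) ∈ Ap T t :=
        (chi_mem_Ap_iff htree).mpr le_rfl
      rw [← hAp] at h1
      exact (chi_mem_Ap_iff htree).mp h1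
    have hts : t ≤ s := by
      have h1 : (⟨chi T s, chi_mem htree s⟩ : ↥(KSet T)) ∈ Ap T s :=
        (chi_mem_Ap_iff htree).mpr le_rfl
      rw [hAp] at h1
      exact (chi_mem_Ap_iff htree).mp h1
    rw [le_antisymm hst hts]
  · -- pseudoclopen pairs
    rintro a ⟨t, rfl⟩
    rw [phiK_Vt htree t]
    refine ⟨?_, ?_, ?_⟩
    · exact isClosed_eq ((continuous_apply t).comp continuous_subtype_val) continuous_const
    · rw [show Ap T t = {g : ↥(KSet T) | (g : T → ℝ≥0∞) t = 0}ᶜ from rfl]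
      exact (isClosed_eq ((continuous_apply t).comp continuous_subtype_val)
        continuous_const).isOpen_compl
    · intro g hg
      simp only [Am, Set.mem_setOf_eq] at hg
      simp only [Ap, Set.mem_setOf_eq, hg]
      exact one_ne_zero
  · -- the combinatorial conditions
    intro F H hFfin hHfin hFsub hHsub hdisj
    constructor
    · -- condition 1
      intro hcomb
      by_contra hne
      obtain ⟨g, hgF, hgH⟩ := Set.nonempty_iff_ne_empty.mpr hne
      have hgFt : ∀ t : T, Vt T t ∈ F → (g : T → ℝ≥0∞) t ≠ 0 := by
        intro t ht
        have := Set.mem_iInter₂.mp hgF (Vt T t) ht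
        rw [phiK_Vt htree t] at this
        exact this
      have hgHs : ∀ s : T, Vt T s ∈ H → (g : T → ℝ≥0∞) s ≠ 1 := by
        intro s hs
        intro he
        apply hgH
        refine Set.mem_biUnion hs ?_
        rw [phiK_Vt htree s]
        exact he
      -- build a point of the tree space
      set x : T → Bool := fun u => decide (∃ t, Vt T t ∈ F ∧ u ≤ t) with hxdef
      have hxiff : ∀ u, x u = true ↔ ∃ t, Vt T t ∈ F ∧ u ≤ t := by
        intro u; rw [hxdef]; simp
      have hxmem : x ∈ TreeSpace T := by
        constructor
        · intro u hu v hv huv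
          simp only [Set.mem_setOf_eq] at hu hv
          obtain ⟨t₁, ht₁F, hut₁⟩ := (hxiff u).mp hu
          obtain ⟨t₂, ht₂F, hvt₂⟩ := (hxiff v).mp hv
          have hcomp : t₁ ≤ t₂ ∨ t₂ ≤ t₁ := by
            by_contra hc
            push_neg at hc
            rcases g.2.2.2 t₁ t₂ hc.1 hc.2 with e | e
            · exact hgFt t₁ ht₁F e
            · exact hgFt t₂ ht₂F e
          rcases hcomp with hle | hle
          · exact below_comparable htree (hut₁.trans hle) hvt₂
          · exact below_comparable htree hut₁ (hvt₂.trans hle)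
        · intro a b hab hb
          obtain ⟨t₁, ht₁F, hbt₁⟩ := (hxiff b).mp hb
          exact (hxiff a).mpr ⟨t₁, ht₁F, hab.trans hbt₁⟩
      have hxF : (⟨x, hxmem⟩ : ↥(TreeSpace T)) ∈ ⋂₀ F := by
        intro a haF
        obtain ⟨t, rfl⟩ := hFsub haF
        exact (hxiff t).mpr ⟨t, haF, le_rfl⟩
      have hxH : (⟨x, hxmem⟩ : ↥(TreeSpace T)) ∉ ⋃₀ H := by
        rintro ⟨a, haH, hxa⟩
        obtain ⟨s, rfl⟩ := hHsub haH
        obtain ⟨t, htF, hst⟩ := (hxiff s).mp hxa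
        rcases eq_or_lt_of_le hst with rfl | hlt
        · exact (Set.disjoint_left.mp hdisj htF) haH
        · rcases g.2.2.1 s t hlt with e | e
          · exact hgFt t htF e
          · exact hgHs s haH e
      rw [Set.eq_empty_iff_forall_notMem] at hcomb
      exact hcomb _ ⟨hxF, hxH⟩
    · -- condition 2
      intro hpseudo
      rw [Set.eq_empty_iff_forall_notMem]
      rintro x ⟨hxF, hxH⟩
      set g : T → ℝ≥0∞ := fun u => if (x : T → Bool) u = true then 1 else 0 with hgdef
      have hgK : g ∈ KSet T := by
        refine ⟨fun t => ?_, fun s t hst => ?_, fun s t h1 h2 => ?_⟩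
        · rw [hgdef]; dsimp only; split <;> simp
        · rw [hgdef]; dsimp only
          by_cases ht : (x : T → Bool) t = true
          · right; rw [if_pos (x.2.2 s t hst.le ht)]
          · left; rw [if_neg ht]
        · rw [hgdef]; dsimp only
          by_cases hs : (x : T → Bool) s = true
          · by_cases ht : (x : T → Bool) t = true
            · exfalso
              have hne : s ≠ t := fun e => h1 (e ▸ le_rfl)
              rcases x.2.1 hs ht hne with h | h
              · exact h1 h
              · exact h2 h
            · right; rw [if_neg ht]
          · left; rw [if_neg hs]
      have hgmem : (⟨g, hgK⟩ : ↥(KSet T)) ∈ (⋂ a ∈ F, (phiK T a).1) \ ⋃ a ∈ H, (phiK T a).2 := by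
        constructor
        · refine Set.mem_iInter₂.mpr fun a haF => ?_
          obtain ⟨t, rfl⟩ := hFsub haF
          rw [phiK_Vt htree t]
          have hxt : (x : T → Bool) t = true := hxF _ haF
          show g t = 1
          rw [hgdef]; dsimp only; rw [if_pos hxt]
        · intro hmem
          obtain ⟨a, haH, hmem'⟩ := Set.mem_iUnion₂.mp hmem
          obtain ⟨s, rfl⟩ := hHsub haH
          rw [phiK_Vt htree s] at hmem'
          have hxs : (x : T → Bool) s ≠ true := fun h => hxH ⟨Vt T s, haH, h⟩
          apply hmem'
          show g s = 0
          rw [hgdef]; dsimp only; rw [if_neg hxs]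
      rw [Set.eq_empty_iff_forall_notMem] at hpseudo
      exact hpseudo _ hgmem

lemma isPathConnected_KSet
    (htree : ∀ t : T, IsChain (· ≤ ·) {s | s < t} ∧ Set.IsWF {s | s < t})
    (hcnt : ∀ c : Set T, IsChain (· ≤ ·) c → c.Countable) :
    IsPathConnected (KSet T) := by
  classical
  refine ⟨0, zero_mem_KSet, ?_⟩
  intro g hg
  set C : Set T := {t | g t ≠ 0} with hCdef
  have hCchain : IsChain (· ≤ ·) C := by
    intro s hs t ht hne
    by_contra hc
    push_neg at hc
    rcases hg.2.2 s t hc.1 hc.2 with e | e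
    · exact hs e
    · exact ht e
  obtain ⟨f, hf⟩ := Set.countable_iff_exists_injective.mp (hcnt C hCchain)
  -- the weights
  set F0 : ℕ → ℝ := fun n => (1 / 2) ^ n * 4⁻¹ with hF0def
  have hF0sum : Summable F0 := summable_geometric_two.mul_right _
  have hF0pos : ∀ n, 0 < F0 n := fun n => by positivity
  have hF0tsum : ∑' n, F0 n = 2⁻¹ := by
    rw [hF0def, tsum_mul_right, tsum_geometric_two]; norm_num
  set w : ↥C → ℝ := fun s => F0 (f s) with hwdef
  have hwsum : Summable w := hF0sum.comp_injective hf
  have hwpos : ∀ s, 0 < w s := fun s => hF0pos _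
  -- the embedding j of C into (0, 1/2]
  set j : T → ℝ := fun t => ∑' s : ↥C, (if (s : T) ≤ t then w s else 0) with hjdef
  have htermsum : ∀ t, Summable (fun s : ↥C => if (s : T) ≤ t then w s else 0) := by
    intro t
    refine Summable.of_nonneg_of_le (fun s => ?_) (fun s => ?_) hwsum
    · split <;> [exact (hwpos _).le; exact le_rfl]
    · split <;> [exact le_rfl; exact (hwpos _).le]
  have hjmono : ∀ {a t : T}, a ≤ t → j a ≤ j t := by
    intro a t hat
    refine Summable.tsum_le_tsum (fun s => ?_) (htermsum a) (htermsum t)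
    by_cases hs : (s : T) ≤ a
    · rw [if_pos hs, if_pos (hs.trans hat)]
    · rw [if_neg hs]
      split <;> [exact (hwpos _).le; exact le_rfl]
  have hjstrict : ∀ {a t : T}, t ∈ C → a < t → j a < j t := by
    intro a t ht hat
    refine Summable.tsum_lt_tsum (i := ⟨t, ht⟩) (fun s => ?_) ?_ (htermsum a) (htermsum t)
    · by_cases hs : (s : T) ≤ a
      · rw [if_pos hs, if_pos (hs.trans hat.le)]
      · rw [if_neg hs]
        split <;> [exact (hwpos _).le; exact le_rfl]
    · rw [if_neg (fun h : t ≤ a => absurd (lt_of_lt_of_le hat h) (lt_irrefl a)),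
        if_pos (le_refl t)]
      exact hwpos _
  have hjpos : ∀ t ∈ C, 0 < j t := by
    intro t ht
    refine Summable.tsum_pos (htermsum t) (fun s => ?_) ⟨t, ht⟩ ?_
    · split <;> [exact (hwpos _).le; exact le_rfl]
    · rw [if_pos (le_refl t)]; exact hwpos _
  have hjle : ∀ t, j t ≤ 2⁻¹ := by
    intro t
    have h1 : j t ≤ ∑' s : ↥C, w s := by
      refine Summable.tsum_le_tsum (fun s => ?_) (htermsum t) hwsum
      split <;> [exact le_rfl; exact (hwpos _).le]
    have h2 : ∑' s : ↥C, w s ≤ ∑' n, F0 n :=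
      Summable.tsum_le_tsum_of_inj f hf (fun c _ => (hF0pos c).le) (fun s => le_rfl) hwsum hF0sum
    rw [hF0tsum] at h2
    exact h1.trans h2
  -- the "next value" function
  obtain ⟨nxt, hnxt1, hnxt2, hnxt3⟩ : ∃ nxt : T → ℝ, (∀ s ∈ C, j s < nxt s) ∧
      (∀ s t : T, s ∈ C → t ∈ C → s < t → nxt s ≤ j t) ∧ (∀ s, nxt s ≤ 1) := by
    have hex : ∀ s : T, {t | t ∈ C ∧ s < t}.Nonempty →
        ∃ m, (m ∈ C ∧ s < m) ∧ ∀ d, d ∈ C ∧ s < d → m ≤ d := by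
      intro s hne
      obtain ⟨m, hm, hmin⟩ := exists_min_of_subset_supp htree hg
        (D := {t | t ∈ C ∧ s < t}) (fun t ht => ht.1) hne
      exact ⟨m, hm, hmin⟩
    refine ⟨fun s => if h : {t | t ∈ C ∧ s < t}.Nonempty then j (hex s h).choose else 1,
      ?_, ?_, ?_⟩
    · intro s hs
      by_cases h : {t | t ∈ C ∧ s < t}.Nonempty
      · simp only [dif_pos h]
        exact hjstrict (hex s h).choose_spec.1.1 (hex s h).choose_spec.1.2
      · simp only [dif_neg h]
        calc j s ≤ 2⁻¹ := hjle s
        _ < 1 := by norm_num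
    · intro s t hs ht hst
      have h : {t' | t' ∈ C ∧ s < t'}.Nonempty := ⟨t, ht, hst⟩
      simp only [dif_pos h]
      exact hjmono ((hex s h).choose_spec.2 t ⟨ht, hst⟩)
    · intro s
      by_cases h : {t | t ∈ C ∧ s < t}.Nonempty
      · simp only [dif_pos h]
        calc j _ ≤ 2⁻¹ := hjle _
        _ ≤ 1 := by norm_num
      · simp only [dif_neg h]
        exact le_rfl
  set d : T → ℝ := fun t => (nxt t - j t) / 2 with hddef
  have hdpos : ∀ t ∈ C, 0 < d t := fun t ht => by
    rw [hddef]; dsimp only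
    have := hnxt1 t ht
    linarith
  have hjd_nxt : ∀ t ∈ C, j t + d t ≤ nxt t := fun t ht => by
    rw [hddef]; dsimp only
    have := hnxt1 t ht
    linarith
  have hjd_one : ∀ t ∈ C, j t + d t ≤ 1 := fun t ht =>
    (hjd_nxt t ht).trans (hnxt3 t)
  -- the path
  set γ : unitInterval → (T → ℝ≥0∞) :=
    fun r t => g t ⊓ ENNReal.ofReal (min 1 (((r : ℝ) - j t) / d t)) with hγdef
  have hγ_cont : Continuous γ := by
    refine continuous_pi fun t => ?_
    refine Continuous.min continuous_const ?_
    refine ENNReal.continuous_ofReal.comp ?_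
    exact continuous_const.min (((continuous_subtype_val).sub continuous_const).div_const _)
  have hγ_pos_imp : ∀ (r : unitInterval) (t : T), γ r t ≠ 0 → t ∈ C ∧ j t < (r : ℝ) := by
    intro r t hne
    rw [hγdef] at hne
    dsimp only at hne
    constructor
    · intro h0
      simp [h0] at hne
    · by_contra hc
      have h1 : ((r : ℝ) - j t) / d t ≤ 0 ∨ d t ≤ 0 := by
        by_cases hd : 0 < d t
        · left
          apply div_nonpos_of_nonpos_of_nonneg _ hd.le
          linarith [not_lt.mp hc]
        · right; exact not_lt.mp hd
      have hC : t ∈ C := by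
        intro h0
        simp [h0] at hne
      rcases h1 with h1 | h1
      · have : min 1 (((r : ℝ) - j t) / d t) ≤ 0 := le_trans (min_le_right _ _) h1
        simp [ENNReal.ofReal_eq_zero.mpr this] at hne
      · exact absurd h1 (not_le.mpr (hdpos t hC))
  have hγ_one : ∀ (r : unitInterval) (s : T), g s = 1 → j s + d s ≤ (r : ℝ) → γ r s = 1 := by
    intro r s hgs hr
    rw [hγdef]
    dsimp only
    have hds : 0 < d s := by
      rcases (em (s ∈ C)) with h | h
      · exact hdpos s h
      · exfalso; exact h (by rw [hCdef]; simp [hgs])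
    have h1 : (1 : ℝ) ≤ ((r : ℝ) - j s) / d s := by
      rw [le_div_iff₀ hds]
      linarith
    rw [min_eq_left h1, ENNReal.ofReal_one, hgs, inf_idem]
  have hγ_memK : ∀ r : unitInterval, γ r ∈ KSet T := by
    intro r
    refine ⟨fun t => ?_, fun s t hst => ?_, fun s t h1 h2 => ?_⟩
    · exact le_trans inf_le_left (hg.1 t)
    · by_cases hne : γ r t = 0
      · exact Or.inl hne
      · right
        obtain ⟨htC, hjt⟩ := hγ_pos_imp r t hne
        have hgt : g t ≠ 0 := htC
        have hgs : g s = 1 := by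
          rcases hg.2.1 s t hst with e | e
          · exact absurd e hgt
          · exact e
        have hsC : s ∈ C := by rw [hCdef]; simp [hgs]
        refine hγ_one r s hgs ?_
        calc j s + d s ≤ nxt s := hjd_nxt s hsC
        _ ≤ j t := hnxt2 s t hsC htC hst
        _ ≤ (r : ℝ) := hjt.le
    · by_cases hs : γ r s = 0
      · exact Or.inl hs
      · right
        by_contra ht
        obtain ⟨hsC, _⟩ := hγ_pos_imp r s hs
        obtain ⟨htC, _⟩ := hγ_pos_imp r t ht
        rcases hg.2.2 s t h1 h2 with e | e
        · exact hsC e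
        · exact htC e
  have hγ0 : γ 0 = 0 := by
    funext t
    rw [hγdef]
    dsimp only
    by_cases ht : t ∈ C
    · have h1 : ((0 : unitInterval) : ℝ) - j t < 0 := by
        have := hjpos t ht
        simp only [Set.Icc.coe_zero]
        linarith
      have h2 : min 1 ((((0 : unitInterval) : ℝ) - j t) / d t) ≤ 0 := by
        refine le_trans (min_le_right _ _) ?_
        apply div_nonpos_of_nonpos_of_nonneg h1.le (hdpos t ht).le
      rw [ENNReal.ofReal_eq_zero.mpr h2]
      simp
    · have : g t = 0 := not_not.mp ht
      simp [this]
  have hγ1 : γ 1 = g := by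
    funext t
    rw [hγdef]
    dsimp only
    by_cases ht : t ∈ C
    · have h1 : (1 : ℝ) ≤ (((1 : unitInterval) : ℝ) - j t) / d t := by
        rw [le_div_iff₀ (hdpos t ht)]
        have := hjd_one t ht
        simp only [Set.Icc.coe_one]
        linarith
      rw [min_eq_left h1, ENNReal.ofReal_one]
      exact inf_eq_left.mpr (hg.1 t)
    · have : g t = 0 := not_not.mp ht
      simp [this]
  exact ⟨⟨⟨γ, hγ_cont⟩, hγ0, hγ1⟩, fun r => hγ_memK r⟩

end Aux

/-- The tree space of a tree `T` is a Boolean image of a compact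
connected Hausdorff space; if all chains of `T` are countable, it is a Boolean
image of a path-connected compact Hausdorff space. -/
theorem tree_space_boolean_image {T : Type u} [PartialOrder T] [OrderBot T]
    (htree : ∀ t : T, IsChain (· ≤ ·) {s | s < t} ∧ Set.IsWF {s | s < t}) :
    (∃ (K : Type u) (_ : TopologicalSpace K) (_ : CompactSpace K) (_ : T2Space K)
       (_ : ConnectedSpace K), IsBooleanImage ↥(TreeSpace T) K) ∧
    ((∀ c : Set T, IsChain (· ≤ ·) c → c.Countable) →
      ∃ (K : Type u) (_ : TopologicalSpace K) (_ : CompactSpace K) (_ : T2Space K)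
        (_ : PathConnectedSpace K), IsBooleanImage ↥(TreeSpace T) K) := by
  constructor
  · exact ⟨↥(KSet T), inferInstance, compactSpace_KSet, inferInstance,
      Subtype.connectedSpace (isConnected_KSet htree), isBooleanImage_KSet htree⟩
  · intro hcnt
    exact ⟨↥(KSet T), inferInstance, compactSpace_KSet, inferInstance,
      isPathConnected_iff_pathConnectedSpace.mp (isPathConnected_KSet htree hcnt),
      isBooleanImage_KSet htree⟩
end
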